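/- arXiv:2310.08119 — 4 statements merged into one kernel-verified Lean document; each statement's English description precedes it below -/
import Mathlib

section
/- Suppose f : ℤ^N × ℝ → ℝ satisfies f(x,u) = o(|u|^{p−1}) uniformly in x as u → 0, and u ↦ f(x,u)/|u|^{p−1} is strictly increasing on (−∞,0) and on (0,∞). Then for every u ≠ 0 and every x, 0 < F(x,u) < (1/p) f(x,u)·u, where F(x,u) = ∫₀^u f(x,s) ds. -/
open scoped BigOperators
open Filter Topology

noncomputable section

abbrev Vtx (N : ℕ) := Fin N → ℤ

def LatAdj {N : ℕ} (x y : Vtx N) : Prop := (∑ i, |x i - y i|) = 1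

instance {N : ℕ} (x y : Vtx N) : Decidable (LatAdj x y) := by
  unfold LatAdj; infer_instance

/-- `∑_x |u x|^p`. -/
noncomputable def lpSum (N : ℕ) (p : ℝ) (u : Vtx N → ℝ) : ℝ := ∑' x, |u x| ^ p

/-- `(1/2) ∑_{x∼y} |u x − u y|^p` (sum over ordered pairs of adjacent vertices). -/
noncomputable def pEnergy (N : ℕ) (p : ℝ) (u : Vtx N → ℝ) : ℝ :=
  (1/2) * ∑' z : Vtx N × Vtx N, if LatAdj z.1 z.2 then |u z.1 - u z.2| ^ p else 0

/-- `(1/2) ∑_{x∼y} |∇_{xy}u|^{p−2} (∇_{xy}u)(∇_{xy}v)`. -/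
noncomputable def gradPair (N : ℕ) (p : ℝ) (u v : Vtx N → ℝ) : ℝ :=
  (1/2) * ∑' z : Vtx N × Vtx N,
    if LatAdj z.1 z.2 then |u z.2 - u z.1| ^ (p - 2) * (u z.2 - u z.1) * (v z.2 - v z.1) else 0

/-- discrete p-Laplacian. -/
noncomputable def pLap (N : ℕ) (p : ℝ) (u : Vtx N → ℝ) (x : Vtx N) : ℝ :=
  ∑' y, if LatAdj x y then |u y - u x| ^ (p - 2) * (u y - u x) else 0

/-- `‖u‖^p` for the potential norm. -/
noncomputable def eNormP (N : ℕ) (p : ℝ) (V : Vtx N → ℝ) (u : Vtx N → ℝ) : ℝ :=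
  pEnergy N p u + ∑' x, V x * |u x| ^ p

/-- the potential norm `‖u‖`. -/
noncomputable def eNorm (N : ℕ) (p : ℝ) (V : Vtx N → ℝ) (u : Vtx N → ℝ) : ℝ :=
  (eNormP N p V u) ^ (1/p)

/-- `F(x,t) = ∫₀^t f(x,s) ds`. -/
noncomputable def Fprim {N : ℕ} (f : Vtx N → ℝ → ℝ) (x : Vtx N) (t : ℝ) : ℝ :=
  ∫ s in (0:ℝ)..t, f x s

/-- the variational functional `Φ`. -/
noncomputable def PhiFun (N : ℕ) (p : ℝ) (V : Vtx N → ℝ) (f : Vtx N → ℝ → ℝ)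
    (u : Vtx N → ℝ) : ℝ :=
  (1/p) * eNormP N p V u - ∑' x, Fprim f x (u x)

/-- `Φ'(u)v`. -/
noncomputable def PhiDeriv (N : ℕ) (p : ℝ) (V : Vtx N → ℝ) (f : Vtx N → ℝ → ℝ)
    (u v : Vtx N → ℝ) : ℝ :=
  gradPair N p u v + (∑' x, V x * |u x| ^ (p - 2) * u x * v x) - ∑' x, f x (u x) * v x

/-- membership in `E = ℓ^p`. -/
def memE (N : ℕ) (p : ℝ) (u : Vtx N → ℝ) : Prop := Summable fun x => |u x| ^ p

/-- the Nehari manifold. -/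
def Nehari (N : ℕ) (p : ℝ) (V : Vtx N → ℝ) (f : Vtx N → ℝ → ℝ) : Set (Vtx N → ℝ) :=
  {u | memE N p u ∧ u ≠ 0 ∧ PhiDeriv N p V f u u = 0}

/-- helper: `∫ s in 0..v, |s|^(p-1) = v^p / p` for `v > 0`, `p > 1`. -/
theorem aux_int_abs_rpow {p v : ℝ} (hp : 1 < p) (hv : 0 < v) :
    (∫ s in (0:ℝ)..v, |s| ^ (p - 1)) = v ^ p / p := by
  have h1 : (∫ s in (0:ℝ)..v, |s| ^ (p - 1)) = ∫ s in (0:ℝ)..v, s ^ (p - 1) := by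
    apply intervalIntegral.integral_congr
    intro s hs
    rw [Set.uIcc_of_le hv.le] at hs
    simp only []
    rw [abs_of_nonneg hs.1]
  rw [h1, integral_rpow (Or.inl (by linarith))]
  rw [Real.zero_rpow (by linarith : p - 1 + 1 ≠ 0)]
  rw [show p - 1 + 1 = p by ring]
  ring

/-- helper: `∫ s in u..0, |s|^(p-1) = (-u)^p / p` for `u < 0`, `p > 1`. -/
theorem aux_int_abs_rpow_neg {p u : ℝ} (hp : 1 < p) (hu : u < 0) :
    (∫ s in u..(0:ℝ), |s| ^ (p - 1)) = (-u) ^ p / p := by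
  have h := intervalIntegral.integral_comp_neg (a := (0:ℝ)) (b := -u)
    (f := fun s => |s| ^ (p - 1))
  simp only [abs_neg, neg_neg, neg_zero] at h
  rw [← h, aux_int_abs_rpow hp (by linarith : (0:ℝ) < -u)]

/-- `0 < F(x,u) < (1/p) f(x,u) u` for `u ≠ 0`. -/
theorem stmt_8 (N : ℕ) (p : ℝ) (hp : 1 < p)
    (f : Vtx N → ℝ → ℝ) (hfc : ∀ x, Continuous (f x))
    (hA3 : ∀ ε > (0:ℝ), ∃ δ > (0:ℝ), ∀ x u, |u| < δ → |f x u| ≤ ε * |u| ^ (p - 1))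
    (hA4 : ∀ x, StrictMonoOn (fun u => f x u / |u| ^ (p - 1)) (Set.Iio 0) ∧
               StrictMonoOn (fun u => f x u / |u| ^ (p - 1)) (Set.Ioi 0)) :
    ∀ (x : Vtx N) (u : ℝ), u ≠ 0 →
      0 < Fprim f x u ∧ Fprim f x u < (1/p) * (f x u * u) := by
  intro x u hu
  simp only [Fprim]
  have hp0 : (0:ℝ) < p := by linarith
  have hp1 : (0:ℝ) < p - 1 := by linarith
  have hmono_neg := (hA4 x).1
  have hmono_pos := (hA4 x).2
  set g : ℝ → ℝ := fun s => f x s / |s| ^ (p - 1) with hgdef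
  have hf0 : f x 0 = 0 := by
    obtain ⟨δ, hδ, h⟩ := hA3 1 one_pos
    have h0 := h x 0 (by simpa using hδ)
    rw [abs_zero, Real.zero_rpow hp1.ne', mul_zero] at h0
    exact abs_nonpos_iff.mp h0
  have hpowpos : ∀ s : ℝ, s ≠ 0 → (0:ℝ) < |s| ^ (p - 1) := fun s hs =>
    Real.rpow_pos_of_pos (abs_pos.mpr hs) _
  have hfeq : ∀ s : ℝ, s ≠ 0 → f x s = g s * |s| ^ (p - 1) := by
    intro s hs
    rw [hgdef]
    simp only []
    rw [div_mul_cancel₀ _ (hpowpos s hs).ne']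
  -- g nonneg on (0,∞)
  have hgpos : ∀ t : ℝ, 0 < t → 0 ≤ g t := by
    intro t ht
    by_contra hneg
    push_neg at hneg
    obtain ⟨δ, hδ, h⟩ := hA3 (-(g t)/2) (by linarith)
    set t' : ℝ := min (δ/2) (t/2) with ht'def
    have ht'0 : 0 < t' := lt_min (by linarith) (by linarith)
    have ht'δ : |t'| < δ := by
      rw [abs_of_pos ht'0]
      exact lt_of_le_of_lt (min_le_left _ _) (by linarith)
    have hlt : g t' < g t :=
      hmono_pos (Set.mem_Ioi.mpr ht'0) (Set.mem_Ioi.mpr ht)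
        (lt_of_le_of_lt (min_le_right _ _) (by linarith))
    have hpow := hpowpos t' ht'0.ne'
    have habs := h x t' ht'δ
    have h2 := neg_abs_le (f x t')
    have h1 : g t / 2 * (|t'| ^ (p - 1)) ≤ f x t' := by nlinarith
    have h3 : g t / 2 ≤ g t' := by
      rw [hgdef]; simp only []
      rw [le_div_iff₀ hpow]; exact h1
    linarith
  -- g nonpos on (-∞,0)
  have hgneg : ∀ t : ℝ, t < 0 → g t ≤ 0 := by
    intro t ht
    by_contra hneg
    push_neg at hneg
    obtain ⟨δ, hδ, h⟩ := hA3 (g t / 2) (by linarith)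
    set t' : ℝ := max (-(δ/2)) (t/2) with ht'def
    have ht'0 : t' < 0 := max_lt (by linarith) (by linarith)
    have ht'δ : |t'| < δ := by
      rw [abs_of_neg ht'0]
      have : -(δ/2) ≤ t' := le_max_left _ _
      linarith
    have hlt : g t < g t' :=
      hmono_neg (Set.mem_Iio.mpr ht) (Set.mem_Iio.mpr ht'0)
        (lt_of_lt_of_le (by linarith) (le_max_right _ _))
    have hpow := hpowpos t' ht'0.ne
    have habs := h x t' ht'δ
    have h2 := le_abs_self (f x t')
    have h1 : f x t' ≤ g t / 2 * (|t'| ^ (p - 1)) := by nlinarith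
    have h3 : g t' ≤ g t / 2 := by
      rw [hgdef]; simp only []
      rw [div_le_iff₀ hpow]; exact h1
    linarith
  -- sign of f
  have hfpos : ∀ s : ℝ, 0 < s → 0 < f x s := by
    intro s hs
    have h1 : g (s/2) < g s :=
      hmono_pos (Set.mem_Ioi.mpr (by linarith)) (Set.mem_Ioi.mpr hs) (by linarith)
    have h2 : 0 ≤ g (s/2) := hgpos _ (by linarith)
    rw [hfeq s hs.ne']
    exact mul_pos (lt_of_le_of_lt h2 h1) (hpowpos s hs.ne')
  have hfneg : ∀ s : ℝ, s < 0 → f x s < 0 := by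
    intro s hs
    have h1 : g s < g (s/2) :=
      hmono_neg (Set.mem_Iio.mpr hs) (Set.mem_Iio.mpr (by linarith)) (by linarith)
    have h2 : g (s/2) ≤ 0 := hgneg _ (by linarith)
    rw [hfeq s hs.ne]
    exact mul_neg_of_neg_of_pos (lt_of_lt_of_le h1 h2) (hpowpos s hs.ne)
  have hcontg : Continuous fun s : ℝ => g u * |s| ^ (p - 1) :=
    continuous_const.mul (continuous_abs.rpow_const (fun _ => Or.inr hp1.le))
  rcases hu.lt_or_gt with hu' | hu'
  · -- u < 0
    have hsymm : (∫ s in (0:ℝ)..u, f x s) = -∫ s in u..(0:ℝ), f x s :=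
      intervalIntegral.integral_symm u 0
    have hposF : (∫ s in u..(0:ℝ), f x s) < 0 := by
      have : (∫ s in u..(0:ℝ), f x s) < ∫ s in u..(0:ℝ), (0:ℝ) := by
        apply intervalIntegral.integral_lt_integral_of_continuousOn_of_le_of_exists_lt hu'
          (hfc x).continuousOn continuousOn_const
        · intro s hs
          rcases lt_or_eq_of_le hs.2 with h | h
          · exact (hfneg s h).le
          · rw [h, hf0]
        · exact ⟨u/2, ⟨by linarith, by linarith⟩, hfneg (u/2) (by linarith)⟩
      simpa using this
    have key : (∫ s in u..(0:ℝ), g u * |s| ^ (p - 1)) < ∫ s in u..(0:ℝ), f x s := by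
      apply intervalIntegral.integral_lt_integral_of_continuousOn_of_le_of_exists_lt hu'
        hcontg.continuousOn (hfc x).continuousOn
      · intro s hs
        rcases lt_or_eq_of_le hs.2 with h | h
        · rw [hfeq s h.ne]
          apply mul_le_mul_of_nonneg_right _ (Real.rpow_nonneg (abs_nonneg _) _)
          exact hmono_neg.monotoneOn (Set.mem_Iio.mpr hu') (Set.mem_Iio.mpr h) hs.1.le
        · rw [h, hf0, abs_zero, Real.zero_rpow hp1.ne', mul_zero]
      · refine ⟨u/2, ⟨by linarith, by linarith⟩, ?_⟩
        rw [hfeq (u/2) (by linarith : (u:ℝ)/2 < 0).ne]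
        exact mul_lt_mul_of_pos_right
          (hmono_neg (Set.mem_Iio.mpr hu') (Set.mem_Iio.mpr (by linarith)) (by linarith))
          (hpowpos _ (by linarith : (u:ℝ)/2 < 0).ne)
    rw [intervalIntegral.integral_const_mul, aux_int_abs_rpow_neg hp hu'] at key
    have hup : (-u) ^ p = (-u) ^ (p - 1) * (-u) := by
      have h := Real.rpow_add (by linarith : (0:ℝ) < -u) (p - 1) 1
      rw [Real.rpow_one] at h
      rw [← h]; norm_num
    have hne : (-u) ^ (p - 1) ≠ 0 := (Real.rpow_pos_of_pos (by linarith) _).ne'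
    have hid : g u * ((-u) ^ p / p) = -((1/p) * (f x u * u)) := by
      rw [hgdef]; simp only []
      rw [abs_of_neg hu', hup]
      field_simp
    rw [hid] at key
    constructor
    · rw [hsymm]; linarith
    · rw [hsymm]; linarith
  · -- 0 < u
    constructor
    · have : (∫ s in (0:ℝ)..u, (0:ℝ)) < ∫ s in (0:ℝ)..u, f x s := by
        apply intervalIntegral.integral_lt_integral_of_continuousOn_of_le_of_exists_lt hu'
          continuousOn_const (hfc x).continuousOn
        · exact fun s hs => (hfpos s hs.1).le
        · exact ⟨u, ⟨hu'.le, le_refl u⟩, hfpos u hu'⟩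
      simpa using this
    · have key : (∫ s in (0:ℝ)..u, f x s) < ∫ s in (0:ℝ)..u, g u * |s| ^ (p - 1) := by
        apply intervalIntegral.integral_lt_integral_of_continuousOn_of_le_of_exists_lt hu'
          (hfc x).continuousOn hcontg.continuousOn
        · intro s hs
          rw [hfeq s hs.1.ne']
          apply mul_le_mul_of_nonneg_right _ (Real.rpow_nonneg (abs_nonneg _) _)
          exact hmono_pos.monotoneOn (Set.mem_Ioi.mpr hs.1) (Set.mem_Ioi.mpr hu') hs.2
        · refine ⟨u/2, ⟨by linarith, by linarith⟩, ?_⟩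
          rw [hfeq (u/2) (by linarith : (0:ℝ) < u/2).ne']
          exact mul_lt_mul_of_pos_right
            (hmono_pos (Set.mem_Ioi.mpr (by linarith)) (Set.mem_Ioi.mpr hu') (by linarith))
            (hpowpos _ (by linarith : (0:ℝ) < u/2).ne')
      rw [intervalIntegral.integral_const_mul, aux_int_abs_rpow hp hu'] at key
      have hup : u ^ p = u ^ (p - 1) * u := by
        have h := Real.rpow_add hu' (p - 1) 1
        rw [Real.rpow_one] at h
        rw [← h]; norm_num
      have hne : u ^ (p - 1) ≠ 0 := (Real.rpow_pos_of_pos hu' _).ne'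
      have hid : g u * (u ^ p / p) = (1/p) * (f x u * u) := by
        rw [hgdef]; simp only []
        rw [abs_of_pos hu', hup]
        field_simp
      rw [hid] at key
      exact key
end
end

section
/- Let E = ℓ^p(ℤ^N) with the norm ‖u‖ = ((1/2)∑_{x∼y}|∇_{xy}u|^p + ∑_x V(x)|u|^p)^{1/p} where 0 < V₁ ≤ V ≤ V₂, and let Φ(u) = (1/p)‖u‖^p − ∑_x F(x,u) with f satisfying assumptions (A₁)–(A₅). Then for every w ∈ E \ {0}, the function s ↦ Φ(sw) on (0,∞) has a unique maximum point s_w ∈ (0,∞), which is the unique positive s with Φ'(sw)(w) = 0; moreover s ↦ Φ(sw) is increasing on (0,s_w) and decreasing on (s_w,∞). -/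
open scoped BigOperators
open Filter Topology

noncomputable section

/-! ### Auxiliary lemmas -/

section Aux

lemma rpow_abs_succ (t : ℝ) {r : ℝ} (hr : r + 1 ≠ 0) : |t| ^ (r+1) = |t| ^ r * |t| := by
  rw [Real.rpow_add' (abs_nonneg t) hr, Real.rpow_one]

lemma abs_rpow_mul_self (t : ℝ) {r : ℝ} (hr : r ≠ 0) : |t| ^ (r-1) * |t| = |t| ^ r := by
  have h := rpow_abs_succ t (r := r-1) (by simpa using hr)
  rw [show r - 1 + 1 = r by ring] at h
  exact h.symm

lemma abs_mul_rpow (s t : ℝ) (r : ℝ) : |s * t| ^ r = |s| ^ r * |t| ^ r := by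
  rw [abs_mul, Real.mul_rpow (abs_nonneg s) (abs_nonneg t)]

variable {p q : ℝ} {f : ℝ → ℝ}

lemma fbound' (hp : 1 < p) (hq : p < q) {a δ : ℝ} (ha : 0 < a) (hδ : 0 < δ)
    (hA1 : ∀ u, |f u| ≤ a * (1 + |u| ^ (q - 1)))
    (h1 : ∀ u, |u| < δ → |f u| ≤ 1 * |u| ^ (p - 1)) :
    ∀ u, |f u| ≤ |u| ^ (p-1) + (a / δ ^ (q-1) + a) * |u| ^ (q-1) := by
  have hq1 : (0:ℝ) < q - 1 := by linarith
  intro u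
  rcases lt_or_ge |u| δ with h | h
  · have := h1 u h
    have h2 : (0:ℝ) ≤ (a / δ ^ (q-1) + a) * |u| ^ (q-1) := by positivity
    nlinarith [this]
  · have h5 : δ ^ (q-1) ≤ |u| ^ (q-1) := Real.rpow_le_rpow hδ.le h hq1.le
    have h2 : a ≤ a / δ ^ (q-1) * |u| ^ (q-1) := by
      rw [div_mul_eq_mul_div, le_div_iff₀ (by positivity)]
      nlinarith
    have h3 := hA1 u
    have h4 : (0:ℝ) ≤ |u| ^ (p-1) := by positivity
    nlinarith

lemma fzero (hp : 1 < p)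
    (hA3 : ∀ ε > (0:ℝ), ∃ δ > (0:ℝ), ∀ u, |u| < δ → |f u| ≤ ε * |u| ^ (p - 1)) :
    f 0 = 0 := by
  obtain ⟨δ, hδ, h1⟩ := hA3 1 one_pos
  have := h1 0 (by simpa using hδ)
  rw [abs_zero, Real.zero_rpow (by linarith : p - 1 ≠ 0)] at this
  simpa [abs_nonpos_iff] using this

lemma gsign_pos (hp : 1 < p)
    (hA3 : ∀ ε > (0:ℝ), ∃ δ > (0:ℝ), ∀ u, |u| < δ → |f u| ≤ ε * |u| ^ (p - 1))
    (hA4 : StrictMonoOn (fun u => f u / |u| ^ (p - 1)) (Set.Ioi 0))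
    {u : ℝ} (hu : 0 < u) : 0 ≤ f u / |u| ^ (p-1) := by
  by_contra hneg
  push_neg at hneg
  set g : ℝ → ℝ := fun u => f u / |u| ^ (p-1) with hg
  obtain ⟨δ, hδ, h1⟩ := hA3 (-(g u)/2) (by simpa using by linarith)
  set v := min (δ/2) (u/2) with hv
  have hv0 : 0 < v := by positivity
  have hvu : v < u := lt_of_le_of_lt (min_le_right _ _) (by linarith)
  have hvδ : |v| < δ := by
    rw [abs_of_pos hv0]; exact lt_of_le_of_lt (min_le_left _ _) (by linarith)
  have h2 : |g v| ≤ -(g u)/2 := by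
    have h3 := h1 v hvδ
    have h4 : (0:ℝ) < |v| ^ (p-1) := Real.rpow_pos_of_pos (abs_pos.mpr hv0.ne') _
    rw [hg, abs_div, abs_of_pos h4, div_le_iff₀ h4]
    calc |f v| ≤ -(g u)/2 * |v| ^ (p-1) := h3
    _ = _ := by ring
  have h5 : g v < g u := hA4 hv0 hu hvu
  have h6 : -(-(g u)/2) ≤ g v := neg_le_of_abs_le h2 |>.trans_eq' (by ring_nf)
  linarith [abs_le.mp h2]

lemma gsign_neg (hp : 1 < p)
    (hA3 : ∀ ε > (0:ℝ), ∃ δ > (0:ℝ), ∀ u, |u| < δ → |f u| ≤ ε * |u| ^ (p - 1))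
    (hA4 : StrictMonoOn (fun u => f u / |u| ^ (p - 1)) (Set.Iio 0))
    {u : ℝ} (hu : u < 0) : f u / |u| ^ (p-1) ≤ 0 := by
  by_contra hneg
  push_neg at hneg
  set g : ℝ → ℝ := fun u => f u / |u| ^ (p-1) with hg
  obtain ⟨δ, hδ, h1⟩ := hA3 ((g u)/2) (by positivity)
  set v := max (-(δ/2)) (u/2) with hv
  have hv0 : v < 0 := by
    apply max_lt (by linarith) (by linarith)
  have hvu : u < v := lt_of_lt_of_le (by linarith) (le_max_right _ _)
  have hvδ : |v| < δ := by
    rw [abs_of_neg hv0, neg_lt]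
    exact lt_of_le_of_lt' (le_max_left _ _) (by linarith)
  have h2 : |g v| ≤ (g u)/2 := by
    have h4 : (0:ℝ) < |v| ^ (p-1) := Real.rpow_pos_of_pos (abs_pos.mpr hv0.ne) _
    rw [hg, abs_div, abs_of_pos h4, div_le_iff₀ h4]
    calc |f v| ≤ (g u)/2 * |v| ^ (p-1) := h1 v hvδ
    _ = _ := by ring
  have h5 : g u < g v := hA4 hu hv0 hvu
  linarith [abs_le.mp h2]

lemma fsign_pos (hp : 1 < p)
    (hA3 : ∀ ε > (0:ℝ), ∃ δ > (0:ℝ), ∀ u, |u| < δ → |f u| ≤ ε * |u| ^ (p - 1))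
    (hA4 : StrictMonoOn (fun u => f u / |u| ^ (p - 1)) (Set.Ioi 0))
    {u : ℝ} (hu : 0 < u) : 0 ≤ f u := by
  have h := gsign_pos hp hA3 hA4 hu
  have h4 : (0:ℝ) < |u| ^ (p-1) := Real.rpow_pos_of_pos (abs_pos.mpr hu.ne') _
  by_contra hc
  push_neg at hc
  have := div_neg_of_neg_of_pos hc h4
  linarith

lemma fsign_neg (hp : 1 < p)
    (hA3 : ∀ ε > (0:ℝ), ∃ δ > (0:ℝ), ∀ u, |u| < δ → |f u| ≤ ε * |u| ^ (p - 1))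
    (hA4 : StrictMonoOn (fun u => f u / |u| ^ (p - 1)) (Set.Iio 0))
    {u : ℝ} (hu : u < 0) : f u ≤ 0 := by
  have h := gsign_neg hp hA3 hA4 hu
  have h4 : (0:ℝ) < |u| ^ (p-1) := Real.rpow_pos_of_pos (abs_pos.mpr hu.ne) _
  by_contra hc
  push_neg at hc
  have := div_pos hc h4
  linarith

lemma integral_abs_rpow_pos (hp : 1 < p) {u : ℝ} (hu : 0 ≤ u) :
    ∫ t in (0:ℝ)..u, |t| ^ (p-1) = u ^ p / p := by
  have h1 : ∫ t in (0:ℝ)..u, |t| ^ (p-1) = ∫ t in (0:ℝ)..u, t ^ (p-1) := by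
    apply intervalIntegral.integral_congr
    intro t ht
    rw [Set.uIcc_of_le hu] at ht
    dsimp only
    rw [abs_of_nonneg ht.1]
  have he : p - 1 + 1 = p := by ring
  rw [h1, integral_rpow (Or.inl (by linarith)), he,
    Real.zero_rpow (by linarith : p ≠ 0), sub_zero]

lemma integral_abs_rpow_neg (hp : 1 < p) {u : ℝ} (hu : u ≤ 0) :
    ∫ t in u..(0:ℝ), |t| ^ (p-1) = (-u) ^ p / p := by
  have h1 : ∫ t in u..(0:ℝ), |t| ^ (p-1) = ∫ t in (0:ℝ)..(-u), |(-t)| ^ (p-1) := by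
    rw [intervalIntegral.integral_comp_neg (fun t => |t| ^ (p-1))]
    norm_num
  rw [h1]
  simp_rw [abs_neg]
  exact integral_abs_rpow_pos hp (by linarith)

lemma Fnonneg (hf0 : f 0 = 0)
    (hpos : ∀ u : ℝ, 0 < u → 0 ≤ f u) (hneg : ∀ u : ℝ, u < 0 → f u ≤ 0) (u : ℝ) :
    0 ≤ ∫ s in (0:ℝ)..u, f s := by
  rcases le_or_gt 0 u with h | h
  · apply intervalIntegral.integral_nonneg h
    intro t ht
    rcases eq_or_lt_of_le ht.1 with h0 | h0
    · simp [← h0, hf0]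
    · exact hpos t h0
  · rw [intervalIntegral.integral_symm u 0]
    have h2 : (0:ℝ) ≤ ∫ s in u..0, -f s := by
      apply intervalIntegral.integral_nonneg h.le
      intro t ht
      rw [neg_nonneg]
      rcases eq_or_lt_of_le ht.2 with h0 | h0
      · simp [h0, hf0]
      · exact hneg t h0
    rw [intervalIntegral.integral_neg] at h2
    linarith

lemma Fbound {C : ℝ} (hp : 1 < p) (hq : p < q) (hC : 0 ≤ C)
    (hb : ∀ v : ℝ, |f v| ≤ |v| ^ (p-1) + C * |v| ^ (q-1)) (u : ℝ) :
    |∫ s in (0:ℝ)..u, f s| ≤ (|u| ^ (p-1) + C * |u| ^ (q-1)) * |u| := by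
  have key : ∀ t ∈ Set.uIoc (0:ℝ) u, ‖f t‖ ≤ |u| ^ (p-1) + C * |u| ^ (q-1) := by
    intro t ht
    have htu : |t| ≤ |u| := by
      rcases le_total (0:ℝ) u with h | h
      · rw [Set.uIoc_of_le h] at ht
        rw [abs_of_pos ht.1, abs_of_nonneg h]; exact ht.2
      · rw [Set.uIoc_of_ge h] at ht
        rw [abs_of_nonpos ht.2, abs_of_nonpos h]; linarith [ht.1]
    have h1 : |t| ^ (p-1) ≤ |u| ^ (p-1) := Real.rpow_le_rpow (abs_nonneg t) htu (by linarith)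
    have h2 : |t| ^ (q-1) ≤ |u| ^ (q-1) := Real.rpow_le_rpow (abs_nonneg t) htu (by linarith)
    calc ‖f t‖ = |f t| := rfl
    _ ≤ |t| ^ (p-1) + C * |t| ^ (q-1) := hb t
    _ ≤ _ := by nlinarith
  have := intervalIntegral.norm_integral_le_of_norm_le_const key
  simpa using this

lemma pF_le_fu (hp : 1 < p) (hfc : Continuous f) (hf0 : f 0 = 0)
    (hmp : StrictMonoOn (fun u => f u / |u| ^ (p - 1)) (Set.Ioi 0))
    (hmn : StrictMonoOn (fun u => f u / |u| ^ (p - 1)) (Set.Iio 0)) (u : ℝ) :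
    p * ∫ s in (0:ℝ)..u, f s ≤ f u * u := by
  have hp0 : (0:ℝ) < p := by linarith
  set g : ℝ → ℝ := fun v => f v / |v| ^ (p-1) with hg
  have hcont : Continuous fun t : ℝ => |t| ^ (p-1) :=
    continuous_abs.rpow_const fun _ => Or.inr (by linarith)
  rcases lt_trichotomy u 0 with hu | hu | hu
  · have habs : (0:ℝ) < |u| ^ (p-1) := Real.rpow_pos_of_pos (abs_pos.mpr hu.ne) _
    have hpt : ∀ t ∈ Set.Icc u 0, g u * |t| ^ (p-1) ≤ f t := by
      intro t ht
      rcases eq_or_lt_of_le ht.2 with h0 | h0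
      · simp [h0, hf0, Real.zero_rpow (by linarith : p - 1 ≠ 0)]
      · have hgu : g u ≤ g t := by
          rcases eq_or_lt_of_le ht.1 with h1 | h1
          · rw [h1]
          · exact (hmn hu h0 h1).le
        calc g u * |t| ^ (p-1) ≤ g t * |t| ^ (p-1) :=
              mul_le_mul_of_nonneg_right hgu (by positivity)
        _ = f t := by
            have hX : |t| ^ (p-1) ≠ 0 := (Real.rpow_pos_of_pos (abs_pos.mpr h0.ne) _).ne'
            exact div_mul_cancel₀ (f t) hX
    have hint : ∫ t in u..(0:ℝ), g u * |t| ^ (p-1) ≤ ∫ t in u..(0:ℝ), f t := by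
      apply intervalIntegral.integral_mono_on hu.le
        ((continuous_const.mul hcont).intervalIntegrable _ _) (hfc.intervalIntegrable _ _) hpt
    rw [intervalIntegral.integral_const_mul, integral_abs_rpow_neg hp hu.le] at hint
    rw [intervalIntegral.integral_symm u 0]
    have hkey : -(g u * ((-u) ^ p / p)) * p = f u * u := by
      have h2 : (-u) ^ p = |u| ^ (p-1) * (-u) := by
        rw [abs_of_neg hu]
        rw [← Real.rpow_add_one (by linarith : (-u) ≠ 0)]
        norm_num
      rw [hg, h2]
      field_simp
    nlinarith [hint]
  · simp [hu, hf0]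
  · have habs : (0:ℝ) < |u| ^ (p-1) := Real.rpow_pos_of_pos (abs_pos.mpr hu.ne') _
    have hpt : ∀ t ∈ Set.Icc (0:ℝ) u, f t ≤ g u * |t| ^ (p-1) := by
      intro t ht
      rcases eq_or_lt_of_le ht.1 with h0 | h0
      · simp [← h0, hf0, Real.zero_rpow (by linarith : p - 1 ≠ 0)]
      · have hgu : g t ≤ g u := by
          rcases eq_or_lt_of_le ht.2 with h1 | h1
          · rw [h1]
          · exact (hmp h0 hu h1).le
        calc f t = g t * |t| ^ (p-1) := by
              have hX : |t| ^ (p-1) ≠ 0 := (Real.rpow_pos_of_pos (abs_pos.mpr h0.ne') _).ne'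
              exact (div_mul_cancel₀ (f t) hX).symm
        _ ≤ g u * |t| ^ (p-1) := mul_le_mul_of_nonneg_right hgu (by positivity)
    have hint : ∫ t in (0:ℝ)..u, f t ≤ ∫ t in (0:ℝ)..u, g u * |t| ^ (p-1) := by
      apply intervalIntegral.integral_mono_on hu.le (hfc.intervalIntegrable _ _)
        ((continuous_const.mul hcont).intervalIntegrable _ _) hpt
    rw [intervalIntegral.integral_const_mul, integral_abs_rpow_pos hp hu.le] at hint
    have hkey : g u * (u ^ p / p) * p = f u * u := by
      have h2 : u ^ p = |u| ^ (p-1) * u := by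
        rw [abs_of_pos hu, ← Real.rpow_add_one hu.ne']
        norm_num
      rw [hg, h2]
      field_simp
    nlinarith [hint]

end Aux

section VAux
variable {N : ℕ} {V : Vtx N → ℝ} {T : ℕ}

lemma Vstep (hA2V : ∀ x (i : Fin N), V (x + (T : ℤ) • Pi.single i 1) = V x) :
    ∀ (c : ℤ) (x : Vtx N) (i : Fin N), V (x + (c * T) • Pi.single i 1) = V x := by
  intro c
  induction c using Int.induction_on with
  | zero => intro x i; simp
  | succ k ih =>
      intro x i
      have harg : x + ((k + 1 : ℤ) * T) • Pi.single i 1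
          = (x + ((k : ℤ) * T) • Pi.single i 1) + (T : ℤ) • Pi.single i 1 := by
        rw [add_assoc, ← add_smul]; ring_nf
      rw [harg, hA2V _ i, ih]
  | pred k ih =>
      intro x i
      have h0 := hA2V (x + ((-(k+1) : ℤ) * T) • Pi.single i 1) i
      have harg : (x + ((-(k+1) : ℤ) * T) • Pi.single i 1) + (T : ℤ) • Pi.single i 1
          = x + ((-(k:ℤ)) * T) • Pi.single i 1 := by
        rw [add_assoc, ← add_smul]; ring_nf
      rw [harg] at h0
      rw [ih] at h0
      have h2 : ((-(k:ℤ)-1) * T) = ((-(k+1):ℤ) * T) := by ring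
      rw [h2]
      exact h0.symm

lemma Vshift (hA2V : ∀ x (i : Fin N), V (x + (T : ℤ) • Pi.single i 1) = V x)
    (k : Vtx N) (x : Vtx N) : V (x + fun i => k i * T) = V x := by
  have key : ∀ (s : Finset (Fin N)) (x : Vtx N),
      V (x + ∑ i ∈ s, Pi.single i (k i * T)) = V x := by
    intro s
    induction s using Finset.induction_on with
    | empty => intro x; simp
    | insert _ _ hj ih =>
        rename_i j s'
        intro x
        rw [Finset.sum_insert hj, ← add_assoc]
        rw [ih]
        have hsingle : Pi.single j (k j * (T:ℤ)) = (k j * (T:ℤ)) • (Pi.single j (1:ℤ) : Vtx N) := by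
          ext m
          by_cases hm : m = j
          · subst hm; simp
          · simp [Pi.single_apply, hm]
        rw [hsingle, Vstep hA2V]
  have hx : (fun i => k i * (T:ℤ)) = ∑ i, Pi.single i (k i * T) := by
    ext m
    rw [Finset.sum_apply]
    simp [Pi.single_apply]
  rw [hx]
  exact key Finset.univ x

lemma Vbounded (hT : 0 < T)
    (hA2V : ∀ x (i : Fin N), V (x + (T : ℤ) • Pi.single i 1) = V x) :
    ∃ V₂ : ℝ, ∀ x, V x ≤ V₂ := by
  set Bx : Set (Vtx N) := Set.pi Set.univ (fun _ => Set.Icc (0:ℤ) (T-1)) with hBx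
  have hfin : Bx.Finite := Set.Finite.pi (fun _ => Set.finite_Icc _ _)
  have himg : (V '' Bx).Finite := hfin.image V
  have hbdd : BddAbove (V '' Bx) := himg.bddAbove
  obtain ⟨V₂, hV₂⟩ := hbdd
  refine ⟨V₂, fun x => ?_⟩
  have hT' : (0:ℤ) < T := by exact_mod_cast hT
  set r : Vtx N := fun i => x i % T with hr
  have hrB : r ∈ Bx := by
    intro i _
    simp only [hr]
    refine ⟨Int.emod_nonneg _ hT'.ne', ?_⟩
    have := Int.emod_lt_of_pos (x i) hT'
    omega
  have hxr : x = r + fun i => (x i / T) * T := by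
    ext i
    simp only [hr, Pi.add_apply]
    exact (Int.emod_add_ediv_mul (x i) T).symm
  have hVx : V x = V r := by
    rw [hxr]
    exact Vshift hA2V _ r
  rw [hVx]
  exact hV₂ ⟨r, hrB, rfl⟩
end VAux

set_option maxHeartbeats 1000000

/-- for each w ≠ 0, s ↦ Φ(sw) has a unique maximum point on (0,∞),
which is the unique positive critical point of the fibering map. -/
theorem stmt_10 (N : ℕ) (p q : ℝ) (hp : 1 < p) (hq : p < q)
    (V : Vtx N → ℝ) (f : Vtx N → ℝ → ℝ) (T : ℕ) (hT : 0 < T)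
    (hA1 : ∃ a : ℝ, 0 < a ∧ ∀ x u, |f x u| ≤ a * (1 + |u| ^ (q - 1)))
    (hfc : ∀ x, Continuous (f x))
    (hA2V : ∀ x (i : Fin N), V (x + (T : ℤ) • Pi.single i 1) = V x)
    (hA2f : ∀ x (i : Fin N) (u : ℝ), f (x + (T : ℤ) • Pi.single i 1) u = f x u)
    (hVpos : ∀ x, 0 < V x)
    (hA3 : ∀ ε > (0:ℝ), ∃ δ > (0:ℝ), ∀ x u, |u| < δ → |f x u| ≤ ε * |u| ^ (p - 1))
    (hA4 : ∀ x, StrictMonoOn (fun u => f x u / |u| ^ (p - 1)) (Set.Iio 0) ∧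
               StrictMonoOn (fun u => f x u / |u| ^ (p - 1)) (Set.Ioi 0))
    (hA5 : ∀ M : ℝ, ∃ R > (0:ℝ), ∀ x u, R ≤ |u| → M ≤ Fprim f x u / |u| ^ p)
    (w : Vtx N → ℝ) (hw : memE N p w) (hw0 : w ≠ 0) :
    ∃ s_w : ℝ, 0 < s_w ∧
      (∀ s, 0 < s → s ≠ s_w →
        PhiFun N p V f (s • w) < PhiFun N p V f (s_w • w)) ∧
      (∀ s, 0 < s → (PhiDeriv N p V f (s • w) w = 0 ↔ s = s_w)) ∧
      StrictMonoOn (fun s => PhiFun N p V f (s • w)) (Set.Ioc 0 s_w) ∧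
      StrictAntiOn (fun s => PhiFun N p V f (s • w)) (Set.Ici s_w) := by
  classical
  have hp0 : (0:ℝ) < p := by linarith
  have hq0 : (0:ℝ) < q := by linarith
  have hp1 : (0:ℝ) < p - 1 := by linarith
  have hA3x : ∀ x, ∀ ε > (0:ℝ), ∃ δ > (0:ℝ), ∀ u, |u| < δ → |f x u| ≤ ε * |u| ^ (p - 1) := by
    intro x ε hε
    obtain ⟨δ, hδ, h⟩ := hA3 ε hε
    exact ⟨δ, hδ, fun u hu => h x u hu⟩
  obtain ⟨a, ha, hA1'⟩ := hA1
  obtain ⟨δ₀, hδ₀, hδ₀f⟩ := hA3 1 one_pos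
  set C : ℝ := a / δ₀ ^ (q-1) + a with hCdef
  have hC : 0 < C := by rw [hCdef]; positivity
  have hfb : ∀ x u, |f x u| ≤ |u| ^ (p-1) + C * |u| ^ (q-1) := by
    intro x
    exact fbound' hp hq ha hδ₀ (fun u => hA1' x u) (fun u hu => hδ₀f x u hu)
  have hf0 : ∀ x, f x 0 = 0 := fun x => fzero hp (hA3x x)
  have hfpos : ∀ x u, 0 < u → 0 ≤ f x u := fun x u hu => fsign_pos hp (hA3x x) (hA4 x).2 hu
  have hfneg : ∀ x u, u < 0 → f x u ≤ 0 := fun x u hu => fsign_neg hp (hA3x x) (hA4 x).1 hu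
  have hFb : ∀ x u, |Fprim f x u| ≤ (|u| ^ (p-1) + C * |u| ^ (q-1)) * |u| :=
    fun x u => Fbound hp hq hC.le (hfb x) u
  have hpF : ∀ x u, p * Fprim f x u ≤ f x u * u :=
    fun x u => pF_le_fu hp (hfc x) (hf0 x) (hA4 x).2 (hA4 x).1 u
  obtain ⟨x₀, hx₀⟩ : ∃ x₀, w x₀ ≠ 0 := Function.ne_iff.mp hw0
  have hSp : Summable (fun x => |w x| ^ p) := hw
  set Sp : ℝ := ∑' x, |w x| ^ p with hSpdef
  have hwp0 : (0:ℝ) < |w x₀| ^ p := Real.rpow_pos_of_pos (abs_pos.mpr hx₀) _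
  have hSppos : 0 < Sp :=
    lt_of_lt_of_le hwp0 (Summable.le_tsum hSp x₀ (fun j _ => by positivity))
  set Mb : ℝ := Sp ^ (1/p) with hMbdef
  have hMb0 : 0 ≤ Mb := Real.rpow_nonneg hSppos.le _
  have hMble : ∀ x, |w x| ≤ Mb := by
    intro x
    have h1 : |w x| ^ p ≤ Sp := Summable.le_tsum hSp x (fun j _ => by positivity)
    have h2 := Real.rpow_le_rpow (by positivity) h1 (by positivity : (0:ℝ) ≤ 1/p)
    rwa [← Real.rpow_mul (abs_nonneg (w x)), mul_one_div_cancel hp0.ne', Real.rpow_one] at h2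
  have hSq : Summable (fun x => |w x| ^ q) := by
    apply Summable.of_nonneg_of_le (fun x => by positivity)
      (fun x => ?_) (hSp.mul_left (Mb ^ (q-p)))
    have h1 : |w x| ^ q = |w x| ^ (q-p) * |w x| ^ p := by
      rw [← Real.rpow_add' (abs_nonneg _) (by rw [sub_add_cancel]; exact hq0.ne'), sub_add_cancel]
    rw [h1]
    exact mul_le_mul_of_nonneg_right
      (Real.rpow_le_rpow (abs_nonneg _) (hMble x) (by linarith)) (by positivity)
  have hfble : ∀ (s:ℝ) (x : Vtx N),
      |f x (s * w x) * w x| ≤ |s| ^ (p-1) * |w x| ^ p + C * |s| ^ (q-1) * |w x| ^ q := by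
    intro s x
    rw [abs_mul]
    calc |f x (s * w x)| * |w x|
        ≤ (|s * w x| ^ (p-1) + C * |s * w x| ^ (q-1)) * |w x| :=
          mul_le_mul_of_nonneg_right (hfb x _) (abs_nonneg _)
    _ = |s| ^ (p-1) * (|w x| ^ (p-1) * |w x|) + C * |s| ^ (q-1) * (|w x| ^ (q-1) * |w x|) := by
          rw [abs_mul_rpow, abs_mul_rpow]; ring
    _ = _ := by rw [abs_rpow_mul_self (w x) hp0.ne', abs_rpow_mul_self (w x) hq0.ne']
  have hFble : ∀ (s:ℝ) (x : Vtx N),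
      |Fprim f x (s * w x)| ≤ |s| ^ p * |w x| ^ p + (C * |s| ^ q) * |w x| ^ q := by
    intro s x
    have h5 : |Fprim f x (s * w x)| ≤ |s * w x| ^ p + C * |s * w x| ^ q := by
      calc |Fprim f x (s * w x)|
          ≤ (|s * w x| ^ (p-1) + C * |s * w x| ^ (q-1)) * |s * w x| := hFb x _
      _ = |s * w x| ^ (p-1) * |s * w x| + C * (|s * w x| ^ (q-1) * |s * w x|) := by ring
      _ = _ := by
            rw [abs_rpow_mul_self (s * w x) hp0.ne', abs_rpow_mul_self (s * w x) hq0.ne']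
    refine h5.trans (le_of_eq ?_)
    rw [abs_mul_rpow, abs_mul_rpow]
    ring
  have hsumH : ∀ s : ℝ, Summable (fun x => f x (s * w x) * w x) := by
    intro s
    apply Summable.of_norm_bounded
      ((hSp.mul_left (|s| ^ (p-1))).add (hSq.mul_left (C * |s| ^ (q-1))))
    intro x
    rw [Real.norm_eq_abs]
    refine (hfble s x).trans (le_of_eq ?_)
    ring
  have hsumF : ∀ s : ℝ, Summable (fun x => Fprim f x (s * w x)) := by
    intro s
    apply Summable.of_norm_bounded
      ((hSp.mul_left (|s| ^ p)).add (hSq.mul_left (C * |s| ^ q)))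
    intro x
    rw [Real.norm_eq_abs]
    refine (hFble s x).trans (le_of_eq ?_)
    ring
  have hdp : ∀ d : ℝ, |d| ^ (p-2) * d * d = |d| ^ p := by
    intro d
    rcases eq_or_ne d 0 with h | h
    · simp [h, Real.zero_rpow hp0.ne']
    · have hd : 0 < |d| := abs_pos.mpr h
      have h2 : d * d = |d| ^ (2:ℝ) := by
        rw [Real.rpow_two, sq_abs, sq]
      rw [mul_assoc, h2, ← Real.rpow_add hd]
      congr 1
      ring
  have hscale : ∀ s : ℝ, 0 < s → ∀ d : ℝ, |s * d| ^ (p-2) * (s * d) * d = s ^ (p-1) * |d| ^ p := by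
    intro s hs d
    rcases eq_or_ne d 0 with h | h
    · simp [h, Real.zero_rpow hp0.ne']
    · have hss : s ^ (p-1) = s ^ (p-2) * s := by
        rw [show p - 1 = (p-2) + 1 by ring]
        exact Real.rpow_add_one hs.ne' _
      rw [← hdp d, abs_mul_rpow, abs_of_pos hs]
      calc s ^ (p-2) * |d| ^ (p-2) * (s * d) * d
          = (s ^ (p-2) * s) * (|d| ^ (p-2) * d * d) := by ring
      _ = s ^ (p-1) * (|d| ^ (p-2) * d * d) := by rw [hss]
  have hppow : ∀ s : ℝ, 0 < s → ∀ d : ℝ, |s * d| ^ p = s ^ p * |d| ^ p := by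
    intro s hs d
    rw [abs_mul_rpow, abs_of_pos hs]
  set A : ℝ := eNormP N p V w with hAdef
  have hVsum : Summable (fun x => V x * |w x| ^ p) := by
    obtain ⟨V₂, hV₂⟩ := Vbounded hT hA2V
    exact Summable.of_nonneg_of_le
      (fun x => mul_nonneg (hVpos x).le (by positivity))
      (fun x => mul_le_mul_of_nonneg_right (hV₂ x) (by positivity))
      (hSp.mul_left V₂)
  have hA0 : 0 < A := by
    rw [hAdef, eNormP]
    have h1 : 0 ≤ pEnergy N p w := by
      rw [pEnergy]
      apply mul_nonneg (by norm_num)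
      apply tsum_nonneg
      intro z
      by_cases hadj : LatAdj z.1 z.2
      · simp only [if_pos hadj]; positivity
      · simp [hadj]
    have h2 : 0 < ∑' x, V x * |w x| ^ p := by
      refine lt_of_lt_of_le (mul_pos (hVpos x₀) hwp0) ?_
      exact Summable.le_tsum hVsum x₀ (fun j _ => mul_nonneg (hVpos j).le (by positivity))
    linarith
  have hEscale : ∀ s : ℝ, 0 < s → eNormP N p V (s • w) = s ^ p * A := by
    intro s hs
    rw [hAdef, eNormP, eNormP]
    have e1 : pEnergy N p (s • w) = s ^ p * pEnergy N p w := by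
      rw [pEnergy, pEnergy]
      have ht : ∀ z : Vtx N × Vtx N,
          (if LatAdj z.1 z.2 then |(s • w) z.1 - (s • w) z.2| ^ p else 0)
          = s ^ p * (if LatAdj z.1 z.2 then |w z.1 - w z.2| ^ p else 0) := by
        intro z
        by_cases hadj : LatAdj z.1 z.2
        · simp only [if_pos hadj, Pi.smul_apply, smul_eq_mul]
          rw [← mul_sub, hppow s hs]
        · simp [hadj]
      rw [tsum_congr ht, tsum_mul_left]
      ring
    have e2 : ∑' x, V x * |(s • w) x| ^ p = s ^ p * ∑' x, V x * |w x| ^ p := by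
      have ht : ∀ x : Vtx N, V x * |(s • w) x| ^ p = s ^ p * (V x * |w x| ^ p) := by
        intro x
        simp only [Pi.smul_apply, smul_eq_mul]
        rw [hppow s hs]
        ring
      rw [tsum_congr ht, tsum_mul_left]
    rw [e1, e2]
    ring
  have hPhi : ∀ s : ℝ, 0 < s →
      PhiFun N p V f (s • w) = A / p * s ^ p - ∑' x, Fprim f x (s * w x) := by
    intro s hs
    rw [PhiFun, hEscale s hs]
    simp only [Pi.smul_apply, smul_eq_mul]
    ring
  have hDerivEq : ∀ s : ℝ, 0 < s →
      PhiDeriv N p V f (s • w) w = s ^ (p-1) * A - ∑' x, f x (s * w x) * w x := by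
    intro s hs
    rw [PhiDeriv]
    have e1 : gradPair N p (s • w) w = s ^ (p-1) * pEnergy N p w := by
      rw [gradPair, pEnergy]
      have ht : ∀ z : Vtx N × Vtx N,
          (if LatAdj z.1 z.2 then
              |(s • w) z.2 - (s • w) z.1| ^ (p-2) * ((s • w) z.2 - (s • w) z.1) * (w z.2 - w z.1)
            else 0)
          = s ^ (p-1) * (if LatAdj z.1 z.2 then |w z.1 - w z.2| ^ p else 0) := by
        intro z
        by_cases hadj : LatAdj z.1 z.2
        · simp only [if_pos hadj, Pi.smul_apply, smul_eq_mul]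
          rw [← mul_sub, hscale s hs, abs_sub_comm]
        · simp [hadj]
      rw [tsum_congr ht, tsum_mul_left]
      ring
    have e2 : ∑' x, V x * |(s • w) x| ^ (p-2) * ((s • w) x) * w x
        = s ^ (p-1) * ∑' x, V x * |w x| ^ p := by
      have ht : ∀ x : Vtx N, V x * |(s • w) x| ^ (p-2) * ((s • w) x) * w x
          = s ^ (p-1) * (V x * |w x| ^ p) := by
        intro x
        simp only [Pi.smul_apply, smul_eq_mul]
        calc V x * |s * w x| ^ (p-2) * (s * w x) * w x
            = V x * (|s * w x| ^ (p-2) * (s * w x) * w x) := by ring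
        _ = V x * (s ^ (p-1) * |w x| ^ p) := by rw [hscale s hs]
        _ = _ := by ring
      rw [tsum_congr ht, tsum_mul_left]
    have e3 : ∑' x, f x ((s • w) x) * w x = ∑' x, f x (s * w x) * w x := by
      apply tsum_congr
      intro x
      simp only [Pi.smul_apply, smul_eq_mul]
    rw [e1, e2, e3, hAdef, eNormP]
    ring
  have hGderiv : ∀ s : ℝ, 0 < s →
      HasDerivAt (fun t => ∑' x, Fprim f x (t * w x)) (∑' x, f x (s * w x) * w x) s := by
    intro s hs
    have hmem : s ∈ Set.Ioo (0:ℝ) (s+1) := ⟨hs, by linarith⟩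
    refine hasDerivAt_tsum_of_isPreconnected
      (g := fun (x : Vtx N) (t : ℝ) => Fprim f x (t * w x))
      (g' := fun (x : Vtx N) (t : ℝ) => f x (t * w x) * w x)
      (u := fun x => (s+1) ^ (p-1) * |w x| ^ p + C * (s+1) ^ (q-1) * |w x| ^ q)
      ((hSp.mul_left ((s+1) ^ (p-1))).add (hSq.mul_left (C * (s+1) ^ (q-1))))
      isOpen_Ioo isPreconnected_Ioo ?_ ?_ hmem (hsumF s) hmem
    · intro x t _
      have h1 : HasDerivAt (fun y => Fprim f x y) (f x (t * w x)) (t * w x) :=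
        ((hfc x).integral_hasStrictDerivAt 0 (t * w x)).hasDerivAt
      have h2 : HasDerivAt (fun z : ℝ => z * w x) (w x) t := by
        simpa using (hasDerivAt_id t).mul_const (w x)
      have h3 := h1.comp t h2
      exact h3
    · intro x t ht
      rw [Real.norm_eq_abs]
      refine (hfble t x).trans ?_
      have htb : |t| ≤ s + 1 := by
        rw [abs_of_pos ht.1]; exact ht.2.le
      have h1 : |t| ^ (p-1) ≤ (s+1) ^ (p-1) := Real.rpow_le_rpow (abs_nonneg t) htb (by linarith)
      have h2 : |t| ^ (q-1) ≤ (s+1) ^ (q-1) := Real.rpow_le_rpow (abs_nonneg t) htb (by linarith)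
      have h3 : (0:ℝ) ≤ |w x| ^ p := by positivity
      have h4 : (0:ℝ) ≤ |w x| ^ q := by positivity
      have h5 := mul_le_mul_of_nonneg_right h1 h3
      have h6 := mul_le_mul_of_nonneg_left (mul_le_mul_of_nonneg_right h2 h4) hC.le
      nlinarith
  have hHcont : ∀ b : ℝ, 0 < b →
      ContinuousOn (fun t => ∑' x, f x (t * w x) * w x) (Set.Icc (-b) b) := by
    intro b hb
    refine (tendstoUniformlyOn_tsum
      (u := fun x => b ^ (p-1) * |w x| ^ p + C * b ^ (q-1) * |w x| ^ q)
      ((hSp.mul_left _).add (hSq.mul_left _)) ?_).continuousOn ?_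
    · intro x t ht
      rw [Real.norm_eq_abs]
      refine (hfble t x).trans ?_
      have htb : |t| ≤ b := abs_le.mpr ⟨ht.1, ht.2⟩
      have h1 : |t| ^ (p-1) ≤ b ^ (p-1) := Real.rpow_le_rpow (abs_nonneg t) htb (by linarith)
      have h2 : |t| ^ (q-1) ≤ b ^ (q-1) := Real.rpow_le_rpow (abs_nonneg t) htb (by linarith)
      have h3 : (0:ℝ) ≤ |w x| ^ p := by positivity
      have h4 : (0:ℝ) ≤ |w x| ^ q := by positivity
      have h5 := mul_le_mul_of_nonneg_right h1 h3
      have h6 := mul_le_mul_of_nonneg_left (mul_le_mul_of_nonneg_right h2 h4) hC.le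
      nlinarith
    · apply Filter.Frequently.of_forall
      intro F
      apply Continuous.continuousOn
      apply continuous_finset_sum
      intro i _
      exact ((hfc i).comp (continuous_id.mul continuous_const)).mul continuous_const
  have htermnn : ∀ s : ℝ, 0 < s → ∀ x, 0 ≤ f x (s * w x) * w x / s ^ (p-1) := by
    intro s hs x
    apply div_nonneg ?_ (Real.rpow_pos_of_pos hs _).le
    rcases lt_trichotomy (w x) 0 with h | h | h
    · have h1 : s * w x < 0 := mul_neg_of_pos_of_neg hs h
      have := hfneg x _ h1
      nlinarith
    · simp [h]
    · have h1 : 0 < s * w x := mul_pos hs h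
      exact mul_nonneg (hfpos x _ h1) h.le
  have hterm_eq : ∀ s : ℝ, 0 < s → ∀ x : Vtx N,
      f x (s * w x) * w x / s ^ (p-1)
        = (f x (s * w x) / |s * w x| ^ (p-1)) * (|w x| ^ (p-1) * w x) := by
    intro s hs x
    rcases eq_or_ne (w x) 0 with h | h
    · simp [h]
    · have h1 : |s * w x| ^ (p-1) = |s| ^ (p-1) * |w x| ^ (p-1) := abs_mul_rpow s (w x) _
      have h2 : |w x| ^ (p-1) ≠ 0 := (Real.rpow_pos_of_pos (abs_pos.mpr h) _).ne'
      have h3 : s ^ (p-1) ≠ 0 := (Real.rpow_pos_of_pos hs _).ne'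
      rw [h1, abs_of_pos hs]
      field_simp
  have htermlt : ∀ s₁ s₂ : ℝ, 0 < s₁ → s₁ < s₂ → ∀ x : Vtx N, w x ≠ 0 →
      f x (s₁ * w x) * w x / s₁ ^ (p-1) < f x (s₂ * w x) * w x / s₂ ^ (p-1) := by
    intro s₁ s₂ hs₁ h12 x h
    have hs₂ : 0 < s₂ := lt_trans hs₁ h12
    rw [hterm_eq s₁ hs₁ x, hterm_eq s₂ hs₂ x]
    rcases lt_or_gt_of_ne h with hn | hps
    · have hcoef : |w x| ^ (p-1) * w x < 0 :=
        mul_neg_of_pos_of_neg (Real.rpow_pos_of_pos (abs_pos.mpr h) _) hn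
      have harg : s₂ * w x < s₁ * w x := by nlinarith
      have hg : f x (s₂ * w x) / |s₂ * w x| ^ (p-1) < f x (s₁ * w x) / |s₁ * w x| ^ (p-1) :=
        (hA4 x).1 (Set.mem_Iio.mpr (mul_neg_of_pos_of_neg hs₂ hn))
          (Set.mem_Iio.mpr (mul_neg_of_pos_of_neg hs₁ hn)) harg
      exact mul_lt_mul_of_neg_right hg hcoef
    · have hcoef : 0 < |w x| ^ (p-1) * w x :=
        mul_pos (Real.rpow_pos_of_pos (abs_pos.mpr h) _) hps
      have harg : s₁ * w x < s₂ * w x := by nlinarith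
      have hg : f x (s₁ * w x) / |s₁ * w x| ^ (p-1) < f x (s₂ * w x) / |s₂ * w x| ^ (p-1) :=
        (hA4 x).2 (Set.mem_Ioi.mpr (mul_pos hs₁ hps))
          (Set.mem_Ioi.mpr (mul_pos hs₂ hps)) harg
      exact mul_lt_mul_of_pos_right hg hcoef
  have htermle : ∀ s₁ s₂ : ℝ, 0 < s₁ → s₁ < s₂ → ∀ x : Vtx N,
      f x (s₁ * w x) * w x / s₁ ^ (p-1) ≤ f x (s₂ * w x) * w x / s₂ ^ (p-1) := by
    intro s₁ s₂ hs₁ h12 x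
    rcases eq_or_ne (w x) 0 with h | h
    · simp [h]
    · exact (htermlt s₁ s₂ hs₁ h12 x h).le
  have hDmono : ∀ s₁ s₂ : ℝ, 0 < s₁ → s₁ < s₂ →
      (∑' x, f x (s₁ * w x) * w x / s₁ ^ (p-1)) < ∑' x, f x (s₂ * w x) * w x / s₂ ^ (p-1) := by
    intro s₁ s₂ hs₁ h12
    exact Summable.tsum_lt_tsum (htermle s₁ s₂ hs₁ h12) (htermlt s₁ s₂ hs₁ h12 x₀ hx₀)
      ((hsumH s₁).div_const _) ((hsumH s₂).div_const _)
  obtain ⟨t₁, ht₁pos, hD₁⟩ :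
      ∃ t₁ : ℝ, 0 < t₁ ∧ (∑' x, f x (t₁ * w x) * w x / t₁ ^ (p-1)) < A := by
    have hden : (0:ℝ) < 2*(Sp+1) := by nlinarith
    obtain ⟨δ, hδ, hh⟩ := hA3 (A / (2*(Sp+1))) (div_pos hA0 hden)
    have hden2 : (0:ℝ) < 2*(Mb+1) := by nlinarith
    refine ⟨δ / (2*(Mb+1)), div_pos hδ hden2, ?_⟩
    set t₁ : ℝ := δ / (2*(Mb+1)) with ht₁def
    have ht₁ : 0 < t₁ := div_pos hδ hden2
    have hrp : 0 < t₁ ^ (p-1) := Real.rpow_pos_of_pos ht₁ _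
    have hsmall : ∀ x, |t₁ * w x| < δ := by
      intro x
      rw [abs_mul, abs_of_pos ht₁]
      calc t₁ * |w x| ≤ t₁ * Mb := mul_le_mul_of_nonneg_left (hMble x) ht₁.le
      _ < δ := by
          rw [ht₁def, div_mul_eq_mul_div, div_lt_iff₀ hden2]
          nlinarith
    have hb : ∀ x, |f x (t₁ * w x) * w x / t₁ ^ (p-1)| ≤ (A / (2*(Sp+1))) * |w x| ^ p := by
      intro x
      rw [abs_div, abs_of_pos hrp, div_le_iff₀ hrp, abs_mul]
      calc |f x (t₁ * w x)| * |w x|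
          ≤ (A / (2*(Sp+1))) * |t₁ * w x| ^ (p-1) * |w x| :=
            mul_le_mul_of_nonneg_right (hh x _ (hsmall x)) (abs_nonneg _)
      _ = (A / (2*(Sp+1))) * (|w x| ^ (p-1) * |w x|) * t₁ ^ (p-1) := by
            rw [abs_mul_rpow, abs_of_pos ht₁]; ring
      _ = (A / (2*(Sp+1))) * |w x| ^ p * t₁ ^ (p-1) := by
            rw [abs_rpow_mul_self (w x) hp0.ne']
    have hsum1 : Summable (fun x => f x (t₁ * w x) * w x / t₁ ^ (p-1)) := (hsumH t₁).div_const _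
    have hsum1abs : Summable (fun x => |f x (t₁ * w x) * w x / t₁ ^ (p-1)|) := hsum1.abs
    have habs : |∑' x, f x (t₁ * w x) * w x / t₁ ^ (p-1)| ≤ (A / (2*(Sp+1))) * Sp := by
      calc |∑' x, f x (t₁ * w x) * w x / t₁ ^ (p-1)|
          ≤ ∑' x, |f x (t₁ * w x) * w x / t₁ ^ (p-1)| := by
            have h6 := norm_tsum_le_tsum_norm
              (f := fun x => f x (t₁ * w x) * w x / t₁ ^ (p-1))
              (by simpa only [Real.norm_eq_abs] using hsum1abs)
            simpa only [Real.norm_eq_abs] using h6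
      _ ≤ ∑' x, (A / (2*(Sp+1))) * |w x| ^ p := hsum1abs.tsum_le_tsum hb (hSp.mul_left _)
      _ = (A / (2*(Sp+1))) * Sp := by rw [tsum_mul_left]
    have hfin : (A / (2*(Sp+1))) * Sp < A := by
      rw [div_mul_eq_mul_div, div_lt_iff₀ hden]
      nlinarith
    calc (∑' x, f x (t₁ * w x) * w x / t₁ ^ (p-1))
        ≤ |∑' x, f x (t₁ * w x) * w x / t₁ ^ (p-1)| := le_abs_self _
    _ ≤ (A / (2*(Sp+1))) * Sp := habs
    _ < A := hfin
  obtain ⟨t₂', ht₂'pos, hD₂⟩ :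
      ∃ t₂' : ℝ, 0 < t₂' ∧ ∀ s, t₂' ≤ s → A < ∑' x, f x (s * w x) * w x / s ^ (p-1) := by
    obtain ⟨R, hR, hA5R⟩ := hA5 ((A+1) / (p * |w x₀| ^ p))
    have hwne : |w x₀| ≠ 0 := (abs_pos.mpr hx₀).ne'
    have hstart : 0 < (R+1) / |w x₀| := div_pos (by linarith) (abs_pos.mpr hx₀)
    refine ⟨(R+1) / |w x₀|, hstart, ?_⟩
    intro s hss
    have hs : 0 < s := lt_of_lt_of_le hstart hss
    have h1 : R ≤ |s * w x₀| := by
      rw [abs_mul, abs_of_pos hs]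
      have h7 := mul_le_mul_of_nonneg_right hss (abs_nonneg (w x₀))
      rw [div_mul_cancel₀ _ hwne] at h7
      linarith
    have h2 := hA5R x₀ (s * w x₀) h1
    have hupos : 0 < |s * w x₀| ^ p :=
      Real.rpow_pos_of_pos (abs_pos.mpr (mul_ne_zero hs.ne' hx₀)) _
    have h3 : (A+1) / (p * |w x₀| ^ p) * |s * w x₀| ^ p ≤ Fprim f x₀ (s * w x₀) :=
      (le_div_iff₀ hupos).mp h2
    have h4 := hpF x₀ (s * w x₀)
    have hsp : 0 < s ^ p := Real.rpow_pos_of_pos hs p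
    have h5 : f x₀ (s * w x₀) * w x₀ / s ^ (p-1) = (f x₀ (s * w x₀) * (s * w x₀)) / s ^ p := by
      have hsp1 : s ^ (p-1) * s = s ^ p := by
        rw [← Real.rpow_add_one hs.ne' (p-1)]
        congr 1
        ring
      rw [← hsp1]
      have hrne : s ^ (p-1) ≠ 0 := (Real.rpow_pos_of_pos hs _).ne'
      field_simp
    have h6 : |s * w x₀| ^ p = s ^ p * |w x₀| ^ p := hppow s hs (w x₀)
    have hterm : A + 1 ≤ f x₀ (s * w x₀) * w x₀ / s ^ (p-1) := by
      rw [h5, le_div_iff₀ hsp]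
      have h7 : (A+1) * s ^ p = p * ((A+1) / (p * |w x₀| ^ p) * (s ^ p * |w x₀| ^ p)) := by
        field_simp
      rw [h7, ← h6]
      calc p * ((A+1) / (p * |w x₀| ^ p) * |s * w x₀| ^ p)
          ≤ p * Fprim f x₀ (s * w x₀) := mul_le_mul_of_nonneg_left h3 hp0.le
      _ ≤ f x₀ (s * w x₀) * (s * w x₀) := h4
    have hDge : f x₀ (s * w x₀) * w x₀ / s ^ (p-1) ≤ ∑' x, f x (s * w x) * w x / s ^ (p-1) :=
      Summable.le_tsum ((hsumH s).div_const _) x₀ (fun j _ => htermnn s hs j)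
    linarith
  set t₂ : ℝ := max t₂' (t₁+1) with ht₂def
  have ht₁₂ : t₁ < t₂ := lt_of_lt_of_le (by linarith) (le_max_right _ _)
  have ht₂pos : 0 < t₂ := lt_trans ht₁pos ht₁₂
  have hD₂' : A < ∑' x, f x (t₂ * w x) * w x / t₂ ^ (p-1) := hD₂ t₂ (le_max_left _ _)
  have hBsign : ∀ s : ℝ, 0 < s →
      s ^ (p-1) * A - (∑' x, f x (s * w x) * w x)
        = s ^ (p-1) * (A - ∑' x, f x (s * w x) * w x / s ^ (p-1)) := by
    intro s hs
    rw [tsum_div_const]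
    have hrne : s ^ (p-1) ≠ 0 := (Real.rpow_pos_of_pos hs _).ne'
    field_simp
  have hBcont : ContinuousOn (fun s => s ^ (p-1) * A - ∑' x, f x (s * w x) * w x)
      (Set.Icc t₁ t₂) := by
    apply ContinuousOn.sub
    · apply ContinuousOn.mul ?_ continuousOn_const
      exact ContinuousOn.rpow_const continuousOn_id (fun x _ => Or.inr (by linarith))
    · exact (hHcont t₂ ht₂pos).mono (fun t ht => ⟨by linarith [ht.1], ht.2⟩)
  have hB₁ : 0 ≤ t₁ ^ (p-1) * A - ∑' x, f x (t₁ * w x) * w x := by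
    rw [hBsign t₁ ht₁pos]
    have h9 : 0 < A - ∑' x, f x (t₁ * w x) * w x / t₁ ^ (p-1) := by linarith
    exact (mul_pos (Real.rpow_pos_of_pos ht₁pos _) h9).le
  have hB₂ : t₂ ^ (p-1) * A - (∑' x, f x (t₂ * w x) * w x) ≤ 0 := by
    rw [hBsign t₂ ht₂pos]
    have h9 : A - ∑' x, f x (t₂ * w x) * w x / t₂ ^ (p-1) < 0 := by linarith
    exact (mul_neg_of_pos_of_neg (Real.rpow_pos_of_pos ht₂pos _) h9).le
  obtain ⟨s_w, hswmem, hswz⟩ := intermediate_value_Icc' ht₁₂.le hBcont ⟨hB₂, hB₁⟩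
  have hswpos : 0 < s_w := lt_of_lt_of_le ht₁pos hswmem.1
  have hswrne : s_w ^ (p-1) ≠ 0 := (Real.rpow_pos_of_pos hswpos _).ne'
  have hswz' : s_w ^ (p-1) * A - (∑' x, f x (s_w * w x) * w x) = 0 := hswz
  have hDsw : (∑' x, f x (s_w * w x) * w x / s_w ^ (p-1)) = A := by
    have h0 : s_w ^ (p-1) * (A - ∑' x, f x (s_w * w x) * w x / s_w ^ (p-1)) = 0 := by
      rw [← hBsign s_w hswpos]
      exact hswz'
    rcases mul_eq_zero.mp h0 with h | h
    · exact absurd h hswrne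
    · have := sub_eq_zero.mp h
      linarith
  have hBpos : ∀ s, 0 < s → s < s_w →
      0 < s ^ (p-1) * A - ∑' x, f x (s * w x) * w x := by
    intro s hs hlt
    rw [hBsign s hs]
    apply mul_pos (Real.rpow_pos_of_pos hs _)
    rw [sub_pos, ← hDsw]
    exact hDmono s s_w hs hlt
  have hBneg : ∀ s, s_w < s →
      s ^ (p-1) * A - (∑' x, f x (s * w x) * w x) < 0 := by
    intro s hlt
    have hs : 0 < s := lt_trans hswpos hlt
    rw [hBsign s hs]
    apply mul_neg_of_pos_of_neg (Real.rpow_pos_of_pos hs _)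
    rw [sub_neg, ← hDsw]
    exact hDmono s_w s hswpos hlt
  have hphid : ∀ s : ℝ, 0 < s → HasDerivAt (fun t => PhiFun N p V f (t • w))
      (s ^ (p-1) * A - ∑' x, f x (s * w x) * w x) s := by
    intro s hs
    have h1 : HasDerivAt (fun t : ℝ => A / p * t ^ p) (A / p * (p * s ^ (p-1))) s :=
      (Real.hasDerivAt_rpow_const (Or.inl hs.ne')).const_mul (A / p)
    have h3 := h1.sub (hGderiv s hs)
    have h4 : A / p * (p * s ^ (p-1)) = s ^ (p-1) * A := by
      field_simp
    rw [h4] at h3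
    exact h3.congr_of_eventuallyEq
      (Filter.eventuallyEq_of_mem (isOpen_Ioi.mem_nhds hs) (fun t ht => hPhi t ht))
  have hmono : StrictMonoOn (fun s => PhiFun N p V f (s • w)) (Set.Ioc 0 s_w) := by
    apply strictMonoOn_of_deriv_pos (convex_Ioc 0 s_w)
    · intro s hs
      exact (hphid s hs.1).continuousAt.continuousWithinAt
    · intro s hs
      rw [interior_Ioc] at hs
      rw [(hphid s hs.1).deriv]
      exact hBpos s hs.1 hs.2
  have hanti : StrictAntiOn (fun s => PhiFun N p V f (s • w)) (Set.Ici s_w) := by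
    apply strictAntiOn_of_deriv_neg (convex_Ici _)
    · intro s hs
      exact (hphid s (lt_of_lt_of_le hswpos hs)).continuousAt.continuousWithinAt
    · intro s hs
      rw [interior_Ici] at hs
      rw [(hphid s (lt_trans hswpos hs)).deriv]
      exact hBneg s hs
  refine ⟨s_w, hswpos, ?_, ?_, hmono, hanti⟩
  · intro s hs hne
    rcases lt_or_gt_of_ne hne with h | h
    · exact hmono ⟨hs, h.le⟩ ⟨hswpos, le_refl _⟩ h
    · exact hanti Set.self_mem_Ici h.le h
  · intro s hs
    rw [hDerivEq s hs]
    constructor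
    · intro h0
      by_contra hne
      rcases lt_or_gt_of_ne hne with h | h
      · linarith [hBpos s hs h]
      · linarith [hBneg s h]
    · rintro rfl
      exact hswz'
end
end

section
/- With E, Φ, and assumptions (A₁)–(A₅) as above, there exists δ > 0 such that for every w ∈ E with ‖w‖ = 1, the unique maximum point s_w of s ↦ Φ(sw) satisfies s_w ≥ δ. Moreover, for each compact subset K of the unit sphere S of E, there exists C_K > 0 such that s_w ≤ C_K for all w ∈ K. -/
open scoped BigOperators
open Filter Topology

noncomputable section

abbrev Elp (N : ℕ) (p : ℝ) := lp (fun _ : Vtx N => ℝ) (ENNReal.ofReal p)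

section AuxLemmas


lemma V_shift_one {N : ℕ} {T : ℕ} {V : Vtx N → ℝ}
    (hA2V : ∀ x (i : Fin N), V (x + (T : ℤ) • Pi.single i 1) = V x) :
    ∀ (m : ℤ) (i : Fin N) (x : Vtx N), V (x + (T : ℤ) • (m • Pi.single i 1)) = V x := by
  intro m
  induction m using Int.induction_on with
  | zero => intro i x; simp
  | succ n ih =>
      intro i x
      have h1 : x + (T:ℤ) • (((n:ℤ)+1) • Pi.single i 1)
          = (x + (T:ℤ) • ((n:ℤ) • Pi.single i 1)) + (T:ℤ) • Pi.single i 1 := by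
        module
      rw [h1, hA2V, ih]
  | pred n ih =>
      intro i x
      have h1 : x + (T:ℤ) • ((-(n:ℤ)-1) • Pi.single i 1)
          = (x + (T:ℤ) • ((-(n:ℤ)) • Pi.single i 1)) - (T:ℤ) • Pi.single i 1 := by
        module
      have h2 := hA2V (x + (T:ℤ) • ((-(n:ℤ)) • Pi.single i 1) - (T:ℤ) • Pi.single i 1) i
      rw [h1]
      rw [sub_add_cancel] at h2
      rw [← h2, ih]

lemma V_shift {N : ℕ} {T : ℕ} {V : Vtx N → ℝ}
    (hA2V : ∀ x (i : Fin N), V (x + (T : ℤ) • Pi.single i 1) = V x) :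
    ∀ (k : Vtx N) (x : Vtx N), V (x + (T : ℤ) • k) = V x := by
  intro k x
  have hk : k = ∑ i : Fin N, (k i) • Pi.single i (1:ℤ) := by
    funext j
    simp [Finset.sum_apply, Pi.single_apply, Finset.sum_ite_eq']
  rw [hk]
  clear hk
  induction (Finset.univ : Finset (Fin N)) using Finset.induction_on with
  | empty => simp
  | insert _ _ hnotmem ih =>
      rename_i a s
      rw [Finset.sum_insert hnotmem]
      have : x + (T:ℤ) • ((k a) • Pi.single a (1:ℤ) + ∑ i ∈ s, (k i) • Pi.single i (1:ℤ))
          = (x + (T:ℤ) • (∑ i ∈ s, (k i) • Pi.single i (1:ℤ))) + (T:ℤ) • ((k a) • Pi.single a (1:ℤ)) := by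
        module
      rw [this, V_shift_one hA2V, ih]

lemma V_bounds {N : ℕ} {T : ℕ} (hT : 0 < T) {V : Vtx N → ℝ} (hVpos : ∀ x, 0 < V x)
    (hA2V : ∀ x (i : Fin N), V (x + (T : ℤ) • Pi.single i 1) = V x) :
    ∃ V₁ V₂ : ℝ, 0 < V₁ ∧ (∀ x, V₁ ≤ V x) ∧ (∀ x, V x ≤ V₂) := by
  haveI : NeZero T := ⟨hT.ne'⟩
  set g : (Fin N → Fin T) → ℝ := fun c => V (fun i => (c i : ℤ)) with hg
  have hne : (Finset.univ.image g).Nonempty := by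
    refine Finset.image_nonempty.2 Finset.univ_nonempty
  refine ⟨(Finset.univ.image g).min' hne, (Finset.univ.image g).max' hne, ?_, ?_, ?_⟩
  · obtain ⟨c, -, hc⟩ := Finset.mem_image.1 ((Finset.univ.image g).min'_mem hne)
    rw [← hc]; exact hVpos _
  all_goals {
    intro x
    have hrep : V x = g (fun i => ⟨(x i % (T:ℤ)).toNat, by
        have h1 : 0 ≤ x i % (T:ℤ) := Int.emod_nonneg _ (by exact_mod_cast hT.ne')
        have h2 : x i % (T:ℤ) < (T:ℤ) := Int.emod_lt_of_pos _ (by exact_mod_cast hT)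
        omega⟩) := by
      have hx : x = (fun i => ((x i % (T:ℤ)))) + (T:ℤ) • (fun i => x i / (T:ℤ)) := by
        funext i
        simp only [Pi.add_apply, Pi.smul_apply, smul_eq_mul]
        exact (Int.emod_add_mul_ediv _ _).symm
      conv_lhs => rw [hx]
      rw [V_shift hA2V]
      congr 1
      funext i
      have h1 : 0 ≤ x i % (T:ℤ) := Int.emod_nonneg _ (by exact_mod_cast hT.ne')
      simp [Int.toNat_of_nonneg h1]
    rw [hrep]
    first
    | exact Finset.min'_le _ _ (Finset.mem_image_of_mem _ (Finset.mem_univ _))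
    | exact Finset.le_max' _ _ (Finset.mem_image_of_mem _ (Finset.mem_univ _))
  }


-- L1: growth bound on f
lemma f_growth {N : ℕ} {p q : ℝ} (hp : 1 < p) (hq : p < q) {f : Vtx N → ℝ → ℝ}
    (hA1 : ∃ a : ℝ, 0 < a ∧ ∀ x u, |f x u| ≤ a * (1 + |u| ^ (q - 1)))
    (hA3 : ∀ ε > (0:ℝ), ∃ δ > (0:ℝ), ∀ x u, |u| < δ → |f x u| ≤ ε * |u| ^ (p - 1))
    {ε : ℝ} (hε : 0 < ε) :
    ∃ C > (0:ℝ), ∀ x u, |f x u| ≤ ε * |u| ^ (p - 1) + C * |u| ^ (q - 1) := by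
  obtain ⟨a, ha, hA1⟩ := hA1
  obtain ⟨δ, hδ, h3⟩ := hA3 ε hε
  refine ⟨a * (δ ^ (1 - q) + 1), by positivity, fun x u => ?_⟩
  rcases lt_or_ge |u| δ with h | h
  · have := h3 x u h
    have h2 : 0 ≤ a * (δ ^ (1-q) + 1) * |u| ^ (q-1) := by positivity
    linarith
  · have h1 := hA1 x u
    have hu : 0 < |u| := lt_of_lt_of_le hδ h
    have key : a * (1 + |u| ^ (q-1)) ≤ a * (δ ^ (1-q) + 1) * |u| ^ (q-1) := by
      have h2 : (1:ℝ) ≤ (|u| / δ) ^ (q-1) :=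
        Real.one_le_rpow ((le_div_iff₀ hδ).2 (by linarith)) (by linarith)
      have h3' : (|u| / δ) ^ (q-1) = δ ^ (1-q) * |u| ^ (q-1) := by
        rw [Real.div_rpow hu.le hδ.le, div_eq_mul_inv, ← Real.rpow_neg hδ.le]
        ring_nf
      rw [h3'] at h2
      have : a * 1 ≤ a * (δ ^ (1-q) * |u| ^ (q-1)) := by
        exact (mul_le_mul_iff_right₀ ha).2 (by linarith)
      nlinarith [Real.rpow_nonneg (abs_nonneg u) (q-1), ha.le]
    have h4 : 0 ≤ ε * |u| ^ (p-1) := by positivity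
    linarith
-- L2: bound on F
lemma F_growth {N : ℕ} {p q : ℝ} (hp : 1 < p) (hq : p < q) {f : Vtx N → ℝ → ℝ}
    (hA1 : ∃ a : ℝ, 0 < a ∧ ∀ x u, |f x u| ≤ a * (1 + |u| ^ (q - 1)))
    (hA3 : ∀ ε > (0:ℝ), ∃ δ > (0:ℝ), ∀ x u, |u| < δ → |f x u| ≤ ε * |u| ^ (p - 1))
    {ε : ℝ} (hε : 0 < ε) :
    ∃ C > (0:ℝ), ∀ x u, |Fprim f x u| ≤ ε * |u| ^ p + C * |u| ^ q := by
  obtain ⟨C, hC, hb⟩ := f_growth hp hq hA1 hA3 hε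
  refine ⟨C, hC, fun x u => ?_⟩
  rcases eq_or_ne u 0 with rfl | hu
  · simp [Fprim, Real.zero_rpow (by linarith : (0:ℝ) < p).ne', Real.zero_rpow (by linarith : (0:ℝ) < q).ne']
  have habs : 0 < |u| := abs_pos.2 hu
  have key : ∀ s ∈ Set.uIoc (0:ℝ) u, ‖f x s‖ ≤ ε * |u| ^ (p-1) + C * |u| ^ (q-1) := by
    intro s hs
    have hsu : |s| ≤ |u| := by
      rcases le_or_gt 0 u with h | h
      · rw [Set.uIoc_of_le h] at hs
        rw [abs_of_pos hs.1, abs_of_nonneg h]; exact hs.2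
      · rw [Set.uIoc_of_ge h.le] at hs
        rw [abs_of_nonpos hs.2, abs_of_neg h]; linarith [hs.1]
    calc ‖f x s‖ = |f x s| := rfl
      _ ≤ ε * |s| ^ (p-1) + C * |s| ^ (q-1) := hb x s
      _ ≤ ε * |u| ^ (p-1) + C * |u| ^ (q-1) := by
          have h1 := Real.rpow_le_rpow (abs_nonneg s) hsu (by linarith : (0:ℝ) ≤ p-1)
          have h2 := Real.rpow_le_rpow (abs_nonneg s) hsu (by linarith : (0:ℝ) ≤ q-1)
          nlinarith
  have := intervalIntegral.norm_integral_le_of_norm_le_const key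
  have h0 : |(u:ℝ) - 0| = |u| := by rw [sub_zero]
  rw [h0] at this
  calc |Fprim f x u| ≤ (ε * |u| ^ (p-1) + C * |u| ^ (q-1)) * |u| := this
    _ = ε * |u| ^ p + C * |u| ^ q := by
        rw [add_mul, mul_assoc, mul_assoc, ← Real.rpow_add_one habs.ne',
          ← Real.rpow_add_one habs.ne']
        ring_nf

-- L3: lower bound F ≥ -D₁ |u|^p
lemma F_lower {N : ℕ} {p q : ℝ} (hp : 1 < p) (hq : p < q) {f : Vtx N → ℝ → ℝ}
    (hA1 : ∃ a : ℝ, 0 < a ∧ ∀ x u, |f x u| ≤ a * (1 + |u| ^ (q - 1)))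
    (hA3 : ∀ ε > (0:ℝ), ∃ δ > (0:ℝ), ∀ x u, |u| < δ → |f x u| ≤ ε * |u| ^ (p - 1))
    (hA5 : ∀ M : ℝ, ∃ R > (0:ℝ), ∀ x u, R ≤ |u| → M ≤ Fprim f x u / |u| ^ p) :
    ∃ D > (0:ℝ), ∀ x u, -(D * |u| ^ p) ≤ Fprim f x u := by
  obtain ⟨C, hC, hF⟩ := F_growth hp hq hA1 hA3 (one_pos)
  obtain ⟨R, hR, h5⟩ := hA5 0
  refine ⟨1 + C * R ^ (q - p), by positivity, fun x u => ?_⟩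
  rcases eq_or_ne u 0 with rfl | hu
  · simp [Fprim, Real.zero_rpow (by linarith : (0:ℝ) < p).ne']
  have habs : 0 < |u| := abs_pos.2 hu
  rcases le_or_gt R |u| with h | h
  · have h1 := h5 x u h
    have hpow : 0 < |u| ^ p := Real.rpow_pos_of_pos habs p
    have h2 : 0 ≤ Fprim f x u := by
      have := (le_div_iff₀ hpow).1 h1
      linarith
    have h3 : 0 ≤ (1 + C * R ^ (q-p)) * |u| ^ p := by positivity
    linarith
  · have h1 := hF x u
    have h2 : |u| ^ q ≤ |u| ^ p * R ^ (q - p) := by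
      have : |u| ^ q = |u| ^ p * |u| ^ (q - p) := by
        rw [← Real.rpow_add habs]; ring_nf
      rw [this]
      exact mul_le_mul_of_nonneg_left
        (Real.rpow_le_rpow (abs_nonneg u) h.le (by linarith)) (Real.rpow_nonneg (abs_nonneg u) p)
    have h3 : -(1 * |u| ^ p + C * |u| ^ q) ≤ Fprim f x u := by
      have := neg_abs_le (Fprim f x u)
      linarith
    nlinarith


lemma pEnergy_nonneg (N : ℕ) (p : ℝ) (u : Vtx N → ℝ) : 0 ≤ pEnergy N p u := by
  refine mul_nonneg (by norm_num) (tsum_nonneg fun z => ?_)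
  split
  · exact Real.rpow_nonneg (abs_nonneg _) p
  · exact le_refl 0

lemma potSum_nonneg (N : ℕ) (p : ℝ) (V : Vtx N → ℝ) (hV : ∀ x, 0 < V x) (u : Vtx N → ℝ) :
    0 ≤ ∑' x, V x * |u x| ^ p :=
  tsum_nonneg fun x => mul_nonneg (hV x).le (Real.rpow_nonneg (abs_nonneg _) p)

lemma eNormP_smul (N : ℕ) (p : ℝ) (V : Vtx N → ℝ) (w : Vtx N → ℝ) {s : ℝ} (hs : 0 ≤ s) :
    eNormP N p V (s • w) = s ^ p * eNormP N p V w := by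
  unfold eNormP pEnergy
  have h1 : ∀ z : Vtx N × Vtx N,
      (if LatAdj z.1 z.2 then |(s • w) z.1 - (s • w) z.2| ^ p else 0)
      = s ^ p * (if LatAdj z.1 z.2 then |w z.1 - w z.2| ^ p else 0) := by
    intro z
    by_cases h : LatAdj z.1 z.2
    · simp only [h, if_true, Pi.smul_apply, smul_eq_mul]
      rw [show s * w z.1 - s * w z.2 = s * (w z.1 - w z.2) by ring, abs_mul,
        Real.mul_rpow (abs_nonneg s) (abs_nonneg _), abs_of_nonneg hs]
    · simp [h]
  have h2 : ∀ x, V x * |(s • w) x| ^ p = s ^ p * (V x * |w x| ^ p) := by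
    intro x
    simp only [Pi.smul_apply, smul_eq_mul]
    rw [abs_mul, Real.mul_rpow (abs_nonneg s) (abs_nonneg _), abs_of_nonneg hs]
    ring
  rw [tsum_congr h1, tsum_congr h2, tsum_mul_left, tsum_mul_left]
  ring

lemma PhiFun_smul (N : ℕ) (p : ℝ) (V : Vtx N → ℝ) (f : Vtx N → ℝ → ℝ)
    (w : Vtx N → ℝ) {s : ℝ} (hs : 0 ≤ s) :
    PhiFun N p V f (s • w)
      = s ^ p * ((1/p) * eNormP N p V w) - ∑' x, Fprim f x (s * w x) := by
  unfold PhiFun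
  rw [eNormP_smul N p V w hs]
  simp only [Pi.smul_apply, smul_eq_mul]
  ring

lemma memE_smul {N : ℕ} {p : ℝ} {w : Vtx N → ℝ} (hw : memE N p w) (s : ℝ) :
    (Summable fun x => |s * w x| ^ p) ∧ ∑' x, |s * w x| ^ p = |s| ^ p * ∑' x, |w x| ^ p := by
  have h : ∀ x, |s * w x| ^ p = |s| ^ p * |w x| ^ p := fun x => by
    rw [abs_mul, Real.mul_rpow (abs_nonneg s) (abs_nonneg _)]
  constructor
  · exact (funext h : _) ▸ hw.mul_left _
  · rw [tsum_congr h, tsum_mul_left]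

lemma qsum_bound {N : ℕ} {p q : ℝ} (hp : 0 < p) (hq : p < q) {w : Vtx N → ℝ}
    (hw : memE N p w) :
    (Summable fun x => |w x| ^ q) ∧
      ∑' x, |w x| ^ q ≤ (∑' x, |w x| ^ p) * (∑' x, |w x| ^ p) ^ ((q - p) / p) := by
  set S := ∑' x, |w x| ^ p with hS
  have hS0 : 0 ≤ S := tsum_nonneg fun x => Real.rpow_nonneg (abs_nonneg _) p
  have key : ∀ x, |w x| ^ q ≤ |w x| ^ p * S ^ ((q - p) / p) := by
    intro x
    rcases eq_or_ne (w x) 0 with h | h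
    · rw [h]
      simp only [abs_zero, Real.zero_rpow hp.ne', Real.zero_rpow (by linarith : q ≠ 0), zero_mul]
      exact le_refl 0
    · have habs : 0 < |w x| := abs_pos.2 h
      have hle : |w x| ^ p ≤ S := Summable.le_tsum hw x fun j _ => Real.rpow_nonneg (abs_nonneg _) p
      have h1 : |w x| ≤ S ^ (1/p) := by
        have := Real.rpow_le_rpow (Real.rpow_nonneg (abs_nonneg _) p) hle
          (by positivity : (0:ℝ) ≤ 1/p)
        rwa [← Real.rpow_mul (abs_nonneg _), mul_one_div_cancel hp.ne', Real.rpow_one] at this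
      have h2 : |w x| ^ (q - p) ≤ S ^ ((q - p)/p) := by
        calc |w x| ^ (q - p) ≤ (S ^ (1/p)) ^ (q - p) :=
              Real.rpow_le_rpow (abs_nonneg _) h1 (by linarith)
          _ = S ^ ((q - p)/p) := by
              rw [← Real.rpow_mul hS0]; ring_nf
      calc |w x| ^ q = |w x| ^ p * |w x| ^ (q - p) := by
            rw [← Real.rpow_add habs]; ring_nf
        _ ≤ |w x| ^ p * S ^ ((q - p)/p) :=
            mul_le_mul_of_nonneg_left h2 (Real.rpow_nonneg (abs_nonneg _) p)
  have hsum : Summable fun x => |w x| ^ p * S ^ ((q - p)/p) := hw.mul_right _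
  have hsq : Summable fun x => |w x| ^ q :=
    Summable.of_nonneg_of_le (fun x => Real.rpow_nonneg (abs_nonneg _) q) key hsum
  exact ⟨hsq, by
    calc ∑' x, |w x| ^ q ≤ ∑' x, |w x| ^ p * S ^ ((q - p)/p) := Summable.tsum_le_tsum key hsq hsum
      _ = S * S ^ ((q - p)/p) := by rw [tsum_mul_right]⟩

lemma tsumF_bound {N : ℕ} {p q : ℝ} {f : Vtx N → ℝ → ℝ} {ε C : ℝ}
    (hF : ∀ x u, |Fprim f x u| ≤ ε * |u| ^ p + C * |u| ^ q)
    {u : Vtx N → ℝ} (hup : Summable fun x => |u x| ^ p) (huq : Summable fun x => |u x| ^ q) :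
    (Summable fun x => Fprim f x (u x)) ∧
    |∑' x, Fprim f x (u x)| ≤ ε * ∑' x, |u x| ^ p + C * ∑' x, |u x| ^ q := by
  have hsum1 : Summable fun x => ε * |u x| ^ p + C * |u x| ^ q :=
    (hup.mul_left ε).add (huq.mul_left C)
  have habs : Summable fun x => |Fprim f x (u x)| :=
    Summable.of_nonneg_of_le (fun x => abs_nonneg _) (fun x => hF x (u x)) hsum1
  have hsumF : Summable fun x => Fprim f x (u x) := summable_abs_iff.1 habs
  refine ⟨hsumF, ?_⟩
  calc |∑' x, Fprim f x (u x)| ≤ ∑' x, |Fprim f x (u x)| := by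
        simpa using norm_tsum_le_tsum_norm (by simpa using habs : Summable fun x => ‖Fprim f x (u x)‖)
    _ ≤ ∑' x, (ε * |u x| ^ p + C * |u x| ^ q) := Summable.tsum_le_tsum (fun x => hF x (u x)) habs hsum1
    _ = ε * ∑' x, |u x| ^ p + C * ∑' x, |u x| ^ q := by
        rw [Summable.tsum_add (hup.mul_left ε) (huq.mul_left C), tsum_mul_left, tsum_mul_left]

lemma tsumF_split {N : ℕ} {p : ℝ} {f : Vtx N → ℝ → ℝ} {D : ℝ} (hD : 0 ≤ D)
    (hlow : ∀ x t, -(D * |t| ^ p) ≤ Fprim f x t)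
    {u : Vtx N → ℝ} (hup : Summable fun x => |u x| ^ p)
    (hsumF : Summable fun x => Fprim f x (u x)) (x₀ : Vtx N) :
    Fprim f x₀ (u x₀) - D * ∑' x, |u x| ^ p ≤ ∑' x, Fprim f x (u x) := by
  classical
  rw [Summable.tsum_eq_add_tsum_ite hsumF x₀]
  have hs1 : Summable fun x => if x = x₀ then 0 else Fprim f x (u x) := by
    have he : (fun x => if x = x₀ then 0 else Fprim f x (u x))
        = fun x => Fprim f x (u x) - (if x = x₀ then Fprim f x₀ (u x₀) else 0) := by
      funext x
      by_cases h : x = x₀ <;> simp [h]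
    rw [he]
    exact hsumF.sub (summable_of_ne_finset_zero (s := {x₀}) (by intro x hx; simp at hx; simp [hx]))
  have hs2 : Summable fun x => -(D * |u x| ^ p) := (hup.mul_left D).neg
  have hterm : ∀ x, -(D * |u x| ^ p) ≤ if x = x₀ then 0 else Fprim f x (u x) := by
    intro x
    by_cases h : x = x₀
    · subst h
      simp only [if_true, eq_self_iff_true]
      simp
      have : 0 ≤ D * |u x| ^ p := mul_nonneg hD (Real.rpow_nonneg (abs_nonneg _) p)
      linarith
    · simp only [h, if_false]; exact hlow x (u x)
  have h1 : ∑' x, -(D * |u x| ^ p) ≤ ∑' x, (if x = x₀ then 0 else Fprim f x (u x)) :=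
    Summable.tsum_le_tsum hterm hs2 hs1
  rw [tsum_neg, tsum_mul_left] at h1
  linarith

lemma unit_norm_facts {N : ℕ} {p : ℝ} (hp : 0 < p) {V : Vtx N → ℝ} {V₁ V₂ : ℝ}
    (hV₁ : 0 < V₁) (hVl : ∀ x, V₁ ≤ V x) (hVu : ∀ x, V x ≤ V₂)
    {w : Vtx N → ℝ} (hw : memE N p w)
    (hnorm : eNormP N p V w = 1) :
    ∑' x, |w x| ^ p ≤ 1 / V₁ := by
  have hVsum : Summable fun x => V x * |w x| ^ p :=
    Summable.of_nonneg_of_le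
      (fun x => mul_nonneg (le_trans hV₁.le (hVl x)) (Real.rpow_nonneg (abs_nonneg _) p))
      (fun x => mul_le_mul_of_nonneg_right (hVu x) (Real.rpow_nonneg (abs_nonneg _) p))
      (hw.mul_left V₂)
  have h1 : ∑' x, V x * |w x| ^ p ≤ 1 := by
    have := pEnergy_nonneg N p w
    unfold eNormP at hnorm
    linarith
  have h2 : V₁ * ∑' x, |w x| ^ p ≤ ∑' x, V x * |w x| ^ p := by
    rw [← tsum_mul_left]
    exact Summable.tsum_le_tsum
      (fun x => mul_le_mul_of_nonneg_right (hVl x) (Real.rpow_nonneg (abs_nonneg _) p))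
      (hw.mul_left V₁) hVsum
  rw [le_div_iff₀ hV₁]
  linarith

lemma eNormP_eq_one {N : ℕ} {p : ℝ} (hp : 0 < p) {V : Vtx N → ℝ} (hVpos : ∀ x, 0 < V x)
    {w : Vtx N → ℝ} (hnorm : (eNormP N p V w) ^ (1/p) = 1) : eNormP N p V w = 1 := by
  have h0 : 0 ≤ eNormP N p V w :=
    add_nonneg (pEnergy_nonneg N p w) (potSum_nonneg N p V hVpos w)
  have := congrArg (fun t : ℝ => t ^ p) hnorm
  rw [← Real.rpow_mul h0 ] at this
  · rw [one_div_mul_cancel hp.ne', Real.rpow_one, Real.one_rpow] at this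
    exact this

end AuxLemmas

/-- uniform lower bound for the maximum point s_w over the unit sphere,
and an upper bound on compact subsets of the unit sphere. -/
theorem stmt_11 (N : ℕ) (p q : ℝ) (hp : 1 < p) (hq : p < q)
    (V : Vtx N → ℝ) (f : Vtx N → ℝ → ℝ) (T : ℕ) (hT : 0 < T)
    (hA1 : ∃ a : ℝ, 0 < a ∧ ∀ x u, |f x u| ≤ a * (1 + |u| ^ (q - 1)))
    (hfc : ∀ x, Continuous (f x))
    (hA2V : ∀ x (i : Fin N), V (x + (T : ℤ) • Pi.single i 1) = V x)
    (hA2f : ∀ x (i : Fin N) (u : ℝ), f (x + (T : ℤ) • Pi.single i 1) u = f x u)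
    (hVpos : ∀ x, 0 < V x)
    (hA3 : ∀ ε > (0:ℝ), ∃ δ > (0:ℝ), ∀ x u, |u| < δ → |f x u| ≤ ε * |u| ^ (p - 1))
    (hA4 : ∀ x, StrictMonoOn (fun u => f x u / |u| ^ (p - 1)) (Set.Iio 0) ∧
               StrictMonoOn (fun u => f x u / |u| ^ (p - 1)) (Set.Ioi 0))
    (hA5 : ∀ M : ℝ, ∃ R > (0:ℝ), ∀ x u, R ≤ |u| → M ≤ Fprim f x u / |u| ^ p)
    [Fact (1 ≤ ENNReal.ofReal p)] :
    (∃ δ > (0:ℝ), ∀ w : Vtx N → ℝ, memE N p w → eNorm N p V w = 1 →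
      ∀ s : ℝ, 0 < s →
        (∀ t : ℝ, 0 < t → PhiFun N p V f (t • w) ≤ PhiFun N p V f (s • w)) →
        δ ≤ s) ∧
    (∀ K : Set (Elp N p), IsCompact K → (∀ w ∈ K, eNorm N p V ⇑w = 1) →
      ∃ C > (0:ℝ), ∀ w ∈ K, ∀ s : ℝ, 0 < s →
        (∀ t : ℝ, 0 < t → PhiFun N p V f (t • ⇑w) ≤ PhiFun N p V f (s • ⇑w)) →
        s ≤ C) := by
  classical
  have hp0 : (0:ℝ) < p := by linarith
  have hq0 : (0:ℝ) < q := by linarith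
  obtain ⟨V₁, V₂, hV₁, hVl, hVu⟩ := V_bounds hT hVpos hA2V
  have hε' : (0:ℝ) < V₁ / (2*p) := by positivity
  obtain ⟨C, hC, hF⟩ := F_growth hp hq hA1 hA3 hε'
  obtain ⟨D₁, hD₁, hlow⟩ := F_lower hp hq hA1 hA3 hA5
  obtain ⟨ε, hε, hεV, hF⟩ : ∃ ε : ℝ, 0 < ε ∧ ε * (1/V₁) = 1/(2*p) ∧
      ∀ x u, |Fprim f x u| ≤ ε * |u| ^ p + C * |u| ^ q := by
    refine ⟨V₁/(2*p), hε', ?_, hF⟩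
    field_simp
    try ring
  obtain ⟨Bq, hBq, hBqdef⟩ : ∃ B : ℝ, 0 < B ∧ B = (1/V₁) * (1/V₁) ^ ((q-p)/p) :=
    ⟨_, mul_pos (by positivity) (Real.rpow_pos_of_pos (by positivity) _), rfl⟩
  have hden : (0:ℝ) < 4*p*(C*Bq+1) := by nlinarith [mul_pos hC hBq]
  obtain ⟨t₀, ht₀, ht₀e⟩ : ∃ t : ℝ, 0 < t ∧ t^q = t^p * (1/(4*p*(C*Bq+1))) := by
    have hX : (0:ℝ) < 1/(4*p*(C*Bq+1)) := one_div_pos.2 hden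
    set X := 1/(4*p*(C*Bq+1)) with hXdef
    refine ⟨X ^ (1/(q-p)), Real.rpow_pos_of_pos hX _, ?_⟩
    calc (X^(1/(q-p)))^q = X^((1/(q-p))*q) := by rw [← Real.rpow_mul hX.le]
      _ = X^((1/(q-p))*p + 1) := by
          congr 1
          have hqp : q - p ≠ 0 := by linarith
          field_simp
          ring
      _ = X^((1/(q-p))*p) * X^(1:ℝ) := Real.rpow_add hX _ _
      _ = (X^(1/(q-p)))^p * X := by rw [Real.rpow_one, ← Real.rpow_mul hX.le]
  obtain ⟨c₀, hc₀, hc₀e⟩ : ∃ c : ℝ, 0 < c ∧ c = t₀^p/(4*p) :=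
    ⟨_, div_pos (Real.rpow_pos_of_pos ht₀ p) (by linarith), rfl⟩
  obtain ⟨D, hD, hDe⟩ : ∃ d : ℝ, 0 < d ∧ d = 3/(2*p) + C*Bq := by
    refine ⟨_, ?_, rfl⟩
    have h1 : (0:ℝ) < 3/(2*p) := div_pos (by norm_num) (by linarith)
    nlinarith [mul_pos hC hBq]
  have key : ∀ w : Vtx N → ℝ, memE N p w → eNormP N p V w = 1 →
      (∑' x, |w x|^p ≤ 1/V₁) ∧ (Summable fun x => |w x|^q) ∧ (∑' x, |w x|^q ≤ Bq) ∧
      (∀ s : ℝ, 0 < s → PhiFun N p V f (s • w) ≤ D * (s^p + s^q)) ∧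
      c₀ ≤ PhiFun N p V f (t₀ • w) := by
    intro w hw hnorm
    have hSp0 : 0 ≤ ∑' x, |w x|^p := tsum_nonneg fun x => Real.rpow_nonneg (abs_nonneg _) p
    have hSp : ∑' x, |w x|^p ≤ 1/V₁ := unit_norm_facts hp0 hV₁ hVl hVu hw hnorm
    obtain ⟨hsq, hSq'⟩ := qsum_bound hp0 hq hw
    have hSq : ∑' x, |w x|^q ≤ Bq := by
      refine le_trans hSq' ?_
      rw [hBqdef]
      have h1 : (∑' x, |w x|^p) ^ ((q-p)/p) ≤ (1/V₁) ^ ((q-p)/p) :=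
        Real.rpow_le_rpow hSp0 hSp (div_nonneg (by linarith) hp0.le)
      exact mul_le_mul hSp h1 (Real.rpow_nonneg hSp0 _) (one_div_nonneg.2 hV₁.le)
    have TFb : ∀ s : ℝ, 0 < s →
        |∑' x, Fprim f x (s * w x)| ≤ s^p * (1/(2*p)) + C * (s^q * Bq) := by
      intro s hs
      obtain ⟨hup, hupEq⟩ := memE_smul hw s
      obtain ⟨huq, huqEq⟩ := memE_smul (p := q) hsq s
      have hb := (tsumF_bound hF hup huq).2
      rw [hupEq, huqEq, abs_of_pos hs] at hb
      have h1 : ε * (s^p * ∑' x, |w x|^p) ≤ ε * (s^p * (1/V₁)) :=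
        mul_le_mul_of_nonneg_left
          (mul_le_mul_of_nonneg_left hSp (Real.rpow_nonneg hs.le p)) hε.le
      have h2 : C * (s^q * ∑' x, |w x|^q) ≤ C * (s^q * Bq) :=
        mul_le_mul_of_nonneg_left
          (mul_le_mul_of_nonneg_left hSq (Real.rpow_nonneg hs.le q)) hC.le
      have e1 : ε * (s^p * (1/V₁)) = s^p * (1/(2*p)) := by
        rw [show ε * (s^p * (1/V₁)) = s^p * (ε * (1/V₁)) by ring, hεV]
      have hb' : |∑' x, Fprim f x (s * w x)|
          ≤ ε * (s^p * ∑' x, |w x|^p) + C * (s^q * ∑' x, |w x|^q) := by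
        rw [← mul_assoc, ← mul_assoc] at hb ⊢
        exact hb
      linarith
    refine ⟨hSp, hsq, hSq, ?_, ?_⟩
    · intro s hs
      rw [PhiFun_smul N p V f w hs.le, hnorm, hDe]
      have hsp : 0 < s^p := Real.rpow_pos_of_pos hs p
      have hsq' : 0 < s^q := Real.rpow_pos_of_pos hs q
      have f1 : -(∑' x, Fprim f x (s * w x)) ≤ s^p * (1/(2*p)) + C * (s^q * Bq) :=
        le_trans (neg_le_abs _) (TFb s hs)
      have e5 : s^p*(1/p*1) + s^p*(1/(2*p)) = s^p*(3/(2*p)) := by ring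
      have e6 : (3/(2*p) + C*Bq)*(s^p+s^q)
          = s^p*(3/(2*p)) + s^q*(3/(2*p)) + C*Bq*s^p + C*(s^q*Bq) := by ring
      have n1 : 0 ≤ s^q*(3/(2*p)) := mul_nonneg hsq'.le (by positivity)
      have n2 : 0 ≤ C*Bq*s^p := by positivity
      linarith
    · rw [PhiFun_smul N p V f w ht₀.le, hnorm, hc₀e]
      have hsp : 0 < t₀^p := Real.rpow_pos_of_pos ht₀ p
      have f1 : ∑' x, Fprim f x (t₀ * w x) ≤ t₀^p * (1/(2*p)) + C * (t₀^q * Bq) :=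
        le_trans (le_abs_self _) (TFb t₀ ht₀)
      have e3 : C * Bq * (1/(4*p*(C*Bq+1))) ≤ 1/(4*p) := by
        rw [mul_one_div, div_le_div_iff₀ hden (by positivity)]
        nlinarith [mul_pos hC hBq]
      have hc4 : C * (t₀^q * Bq) ≤ t₀^p * (1/(4*p)) := by
        rw [ht₀e]
        calc C * (t₀^p * (1/(4*p*(C*Bq+1))) * Bq)
            = t₀^p * (C * Bq * (1/(4*p*(C*Bq+1)))) := by ring
          _ ≤ t₀^p * (1/(4*p)) := mul_le_mul_of_nonneg_left e3 hsp.le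
      have e5 : t₀^p*(1/p*1) - t₀^p*(1/(2*p)) - t₀^p*(1/(4*p)) = t₀^p/(4*p) := by ring
      linarith
  constructor
  · -- Part 1
    refine ⟨min 1 ((c₀/(2*D)) ^ (1/p)),
      lt_min one_pos (Real.rpow_pos_of_pos (by positivity) _), ?_⟩
    intro w hw hnorm s hs hmax
    have hn1 : eNormP N p V w = 1 := eNormP_eq_one hp0 hVpos hnorm
    obtain ⟨hSp, hsq, hSq, hupper, hlower⟩ := key w hw hn1
    have hcΦ : c₀ ≤ PhiFun N p V f (s • w) := le_trans hlower (hmax t₀ ht₀)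
    have h1 : c₀ ≤ D * (s^p + s^q) := le_trans hcΦ (hupper s hs)
    rcases le_or_gt 1 s with h | h
    · exact le_trans (min_le_left _ _) h
    · have hsp : 0 < s^p := Real.rpow_pos_of_pos hs p
      have h2 : s^q ≤ s^p := Real.rpow_le_rpow_of_exponent_ge hs h.le hq.le
      have h3 : c₀/(2*D) ≤ s^p := by
        rw [div_le_iff₀ (by positivity)]
        have h2' : D*s^q ≤ D*s^p := mul_le_mul_of_nonneg_left h2 hD.le
        have e8 : D*(s^p+s^q) = D*s^p + D*s^q := by ring
        have e9 : s^p*(2*D) = D*s^p + D*s^p := by ring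
        linarith
      have h4 : (c₀/(2*D))^(1/p) ≤ s := by
        calc (c₀/(2*D))^(1/p) ≤ (s^p)^(1/p) :=
              Real.rpow_le_rpow (by positivity) h3 (by positivity)
          _ = s := by
              rw [← Real.rpow_mul hs.le, mul_one_div_cancel hp0.ne', Real.rpow_one]
      exact le_trans (min_le_right _ _) h4
  · -- Part 2
    intro K hK hKnorm
    rcases K.eq_empty_or_nonempty with rfl | ⟨w₀, hw₀⟩
    · exact ⟨1, one_pos, fun w hw => (Set.notMem_empty w hw).elim⟩
    have hmem : ∀ w : Elp N p, memE N p ⇑w := by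
      intro w
      have h := lp.memℓp w
      have h2 := (memℓp_gen_iff (p := ENNReal.ofReal p)
        (by rw [ENNReal.toReal_ofReal hp0.le]; exact hp0)).1 h
      rw [ENNReal.toReal_ofReal hp0.le] at h2
      unfold memE
      simpa [Real.norm_eq_abs] using h2
    have hEP : ∀ w ∈ K, eNormP N p V ⇑w = 1 := fun w hw => eNormP_eq_one hp0 hVpos (hKnorm w hw)
    have hne : ∀ w ∈ K, ∃ x, (⇑w : Vtx N → ℝ) x ≠ 0 := by
      intro w hw
      by_contra h
      push_neg at h
      have h0 : eNormP N p V ⇑w = 0 := by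
        unfold eNormP pEnergy
        have e1 : ∀ z : Vtx N × Vtx N,
            (if LatAdj z.1 z.2 then |(⇑w : Vtx N → ℝ) z.1 - (⇑w : Vtx N → ℝ) z.2|^p else 0) = 0 := by
          intro z
          rw [h z.1, h z.2]
          simp [Real.zero_rpow hp0.ne']
        have e2 : ∀ x, V x * |(⇑w : Vtx N → ℝ) x|^p = 0 := by
          intro x
          rw [h x]
          simp [Real.zero_rpow hp0.ne']
        rw [tsum_congr e1, tsum_congr e2, tsum_zero, tsum_zero]
        ring
      rw [hEP w hw] at h0
      exact one_ne_zero h0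
    let xw : K → Vtx N := fun i => (hne i.1 i.2).choose
    let r : K → ℝ := fun i => |(⇑(i.1) : Vtx N → ℝ) (xw i)|/2
    have hr : ∀ i : K, 0 < r i := by
      intro i
      have := (hne i.1 i.2).choose_spec
      exact div_pos (abs_pos.2 this) two_pos
    have hcover : K ⊆ ⋃ i : K, Metric.ball (i.1 : Elp N p) (r i) := by
      intro w hw
      exact Set.mem_iUnion.2 ⟨⟨w, hw⟩, Metric.mem_ball_self (hr ⟨w, hw⟩)⟩
    obtain ⟨t, ht⟩ := hK.elim_finite_subcover
      (fun i : K => Metric.ball (i.1 : Elp N p) (r i)) (fun i => Metric.isOpen_ball) hcover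
    have htne : t.Nonempty := by
      have := ht hw₀
      simp only [Set.mem_iUnion] at this
      obtain ⟨i, hi, -⟩ := this
      exact ⟨i, hi⟩
    obtain ⟨c, hc, hcle⟩ : ∃ c : ℝ, 0 < c ∧ ∀ i ∈ t, c ≤ r i := by
      refine ⟨(t.image r).min' (htne.image r), ?_, ?_⟩
      · obtain ⟨i, -, hi⟩ := Finset.mem_image.1 ((t.image r).min'_mem (htne.image r))
        rw [← hi]
        exact hr i
      · intro i hi
        exact Finset.min'_le _ _ (Finset.mem_image_of_mem r hi)
    have hpt : ∀ w ∈ K, ∃ x₀, c ≤ |(⇑w : Vtx N → ℝ) x₀| := by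
      intro w hw
      have hmem2 := ht hw
      simp only [Set.mem_iUnion] at hmem2
      obtain ⟨i, hit, hball⟩ := hmem2
      refine ⟨xw i, ?_⟩
      have h1 : ‖w - i.1‖ < r i := by rwa [Metric.mem_ball, dist_eq_norm] at hball
      have h2 : |(⇑w : Vtx N → ℝ) (xw i) - (⇑(i.1) : Vtx N → ℝ) (xw i)| ≤ ‖w - i.1‖ := by
        have h3 := lp.norm_apply_le_norm
          (by exact_mod_cast (ENNReal.ofReal_pos.2 hp0).ne' : (ENNReal.ofReal p) ≠ 0)
          (w - i.1) (xw i)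
        simpa [Real.norm_eq_abs] using h3
      have h3 : c ≤ r i := hcle i hit
      have h4 : |(⇑(i.1) : Vtx N → ℝ) (xw i)| = 2 * r i := by
        show |(⇑(i.1) : Vtx N → ℝ) (xw i)| = 2 * (|(⇑(i.1) : Vtx N → ℝ) (xw i)|/2)
        ring
      have h5 := abs_sub_abs_le_abs_sub ((⇑(i.1) : Vtx N → ℝ) (xw i)) ((⇑w : Vtx N → ℝ) (xw i))
      rw [abs_sub_comm] at h5
      linarith
    have hcp : 0 < c^p := Real.rpow_pos_of_pos hc p
    obtain ⟨M₀, hM₀, hM₀c⟩ : ∃ m : ℝ, 0 < m ∧ m * c^p = 1/p + D₁ * (1/V₁) + 1 := by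
      refine ⟨(1/p + D₁ * (1/V₁) + 1)/c^p, ?_, ?_⟩
      · have h1 : 0 < 1/p := by positivity
        have h2 : 0 < D₁ * (1/V₁) := mul_pos hD₁ (by positivity)
        exact div_pos (by linarith) hcp
      · field_simp
    obtain ⟨R₀, hR₀, h5⟩ := hA5 M₀
    refine ⟨max 1 (R₀/c), lt_of_lt_of_le one_pos (le_max_left _ _), ?_⟩
    intro w hw s hs hmax
    by_contra hcon
    push_neg at hcon
    obtain ⟨x₀, hx₀⟩ := hpt w hw
    have hwE : memE N p ⇑w := hmem w
    have hn1 := hEP w hw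
    obtain ⟨hSp, hsq, hSq, hupper, hlower⟩ := key ⇑w hwE hn1
    have hc₀Φ : c₀ ≤ PhiFun N p V f (s • ⇑w) := le_trans hlower (hmax t₀ ht₀)
    have hsR : R₀ ≤ |s * (⇑w : Vtx N → ℝ) x₀| := by
      rw [abs_mul, abs_of_pos hs]
      have h1 : R₀/c < s := lt_of_le_of_lt (le_max_right _ _) hcon
      have h2 : R₀ < s * c := by
        rw [div_lt_iff₀ hc] at h1
        linarith
      have h3 : s * c ≤ s * |(⇑w : Vtx N → ℝ) x₀| := mul_le_mul_of_nonneg_left hx₀ hs.le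
      linarith
    have hF0 : M₀ * (s^p * c^p) ≤ Fprim f x₀ (s * (⇑w : Vtx N → ℝ) x₀) := by
      have h1 := h5 x₀ (s * (⇑w : Vtx N → ℝ) x₀) hsR
      have habs : 0 < |s * (⇑w : Vtx N → ℝ) x₀| := lt_of_lt_of_le hR₀ hsR
      have hpow : 0 < |s * (⇑w : Vtx N → ℝ) x₀|^p := Real.rpow_pos_of_pos habs p
      have h2 : M₀ * |s * (⇑w : Vtx N → ℝ) x₀|^p ≤ Fprim f x₀ (s * (⇑w : Vtx N → ℝ) x₀) := by
        rw [le_div_iff₀ hpow] at h1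
        linarith
      refine le_trans ?_ h2
      refine mul_le_mul_of_nonneg_left ?_ hM₀.le
      rw [abs_mul, Real.mul_rpow (abs_nonneg s) (abs_nonneg _), abs_of_pos hs]
      exact mul_le_mul_of_nonneg_left (Real.rpow_le_rpow hc.le hx₀ hp0.le)
        (Real.rpow_nonneg hs.le p)
    obtain ⟨hupS, hupEq⟩ := memE_smul hwE s
    obtain ⟨huqS, huqEq⟩ := memE_smul (p := q) hsq s
    have hsumF := (tsumF_bound hF hupS huqS).1
    have hsplit := tsumF_split hD₁.le hlow hupS hsumF x₀
    have hSpS : ∑' x, |s * (⇑w : Vtx N → ℝ) x|^p ≤ s^p * (1/V₁) := by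
      rw [hupEq, abs_of_pos hs]
      exact mul_le_mul_of_nonneg_left hSp (Real.rpow_nonneg hs.le p)
    have hΦ : PhiFun N p V f (s • ⇑w) ≤ s^p * (1/p) - M₀*(s^p*c^p) + D₁ * (s^p * (1/V₁)) := by
      rw [PhiFun_smul N p V f ⇑w hs.le, hn1]
      have hD1S : D₁ * ∑' x, |s * (⇑w : Vtx N → ℝ) x|^p ≤ D₁ * (s^p * (1/V₁)) :=
        mul_le_mul_of_nonneg_left hSpS hD₁.le
      have e7 : s^p*(1/p*1) = s^p*(1/p) := by ring
      linarith [hsplit, hF0]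
    have hfinal : PhiFun N p V f (s • ⇑w) ≤ -(s^p) := by
      have e : s^p * (1/p) - M₀*(s^p*c^p) + D₁*(s^p*(1/V₁))
          = s^p * (1/p + D₁*(1/V₁)) - s^p * (M₀*c^p) := by ring
      rw [e, hM₀c] at hΦ
      calc PhiFun N p V f (s • ⇑w)
          ≤ s^p * (1/p + D₁*(1/V₁)) - s^p * (1/p + D₁ * (1/V₁) + 1) := hΦ
        _ = -(s^p) := by ring
    have hsp : 0 < s^p := Real.rpow_pos_of_pos hs p
    linarith
end
end

section
/- With E, Φ, 𝒩 as above and assumptions (A₁)–(A₅), Φ is coercive on the Nehari manifold: if {u_n} ⊂ 𝒩 with ‖u_n‖ → ∞, then Φ(u_n) → ∞. -/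
open scoped BigOperators
open Filter Topology

noncomputable section

section AuxCoercive

open intervalIntegral

private lemma rpow_cont' {r : ℝ} (hr : 0 ≤ r) : Continuous fun x : ℝ => x ^ r :=
  continuous_iff_continuousAt.2 fun x => Real.continuousAt_rpow_const x r (Or.inr hr)

private lemma rpow_fact' {p : ℝ} (hp : 1 < p) (σ : ℝ) : |σ| ^ (p-1) * |σ| = |σ| ^ p := by
  rcases eq_or_ne σ 0 with h | h
  · simp [h, Real.zero_rpow (by linarith : p - 1 ≠ 0), Real.zero_rpow (by linarith : p ≠ 0)]
  · have h0 : (0:ℝ) < |σ| := abs_pos.2 h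
    have h1 : |σ| ^ (p-1) * |σ| ^ (1:ℝ) = |σ| ^ p := by
      rw [← Real.rpow_add h0]; ring_nf
    simpa [Real.rpow_one] using h1

private lemma rpow_fact2' {p : ℝ} (hp : 1 < p) (d : ℝ) : |d| ^ (p-2) * d * d = |d| ^ p := by
  rcases eq_or_ne d 0 with h | h
  · simp [h, Real.zero_rpow (by linarith : p ≠ 0)]
  · have h0 : (0:ℝ) < |d| := abs_pos.2 h
    have hdd : d * d = |d| * |d| := (abs_mul_abs_self d).symm
    have key : |d| ^ (p-2) * |d| ^ (1:ℝ) * |d| ^ (1:ℝ) = |d| ^ p := by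
      rw [← Real.rpow_add h0, ← Real.rpow_add h0]; ring_nf
    rw [Real.rpow_one] at key
    rw [mul_assoc, hdd, ← mul_assoc, key]

private lemma core_pos' {p : ℝ} (hp : 1 < p) {f : ℝ → ℝ} (hfc : Continuous f) (hf0 : f 0 = 0)
    (hmono : MonotoneOn (fun t => f t / |t| ^ (p-1)) (Set.Ioi 0))
    {σ c : ℝ} (hσ : 0 < σ) (hc : 0 ≤ c) (hcσ : c ≤ σ) :
    ∫ τ in c..σ, f τ ≤ (f σ / |σ| ^ (p-1)) * ((σ ^ p - c ^ p) / p) := by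
  set A := f σ / |σ| ^ (p-1) with hA
  have hp1 : (0:ℝ) ≤ p - 1 := by linarith
  have hcont2 : Continuous fun τ : ℝ => A * τ ^ (p-1) := continuous_const.mul (rpow_cont' hp1)
  have hpt : ∀ τ ∈ Set.Icc c σ, f τ ≤ A * τ ^ (p-1) := by
    intro τ ⟨h1, h2⟩
    rcases eq_or_lt_of_le (hc.trans h1) with h0 | h0
    · rw [← h0, hf0, Real.zero_rpow (by linarith : p - 1 ≠ 0), mul_zero]
    · have hmle := hmono (Set.mem_Ioi.2 h0) (Set.mem_Ioi.2 hσ) h2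
      have : f τ = (f τ / |τ| ^ (p-1)) * τ ^ (p-1) := by
        have hτne : τ ^ (p-1) ≠ 0 := ne_of_gt (Real.rpow_pos_of_pos h0 _)
        rw [abs_of_pos h0]; field_simp
      rw [this]
      exact mul_le_mul_of_nonneg_right hmle (Real.rpow_nonneg h0.le _)
  have := intervalIntegral.integral_mono_on (μ := MeasureTheory.volume) hcσ
      (hfc.intervalIntegrable _ _) (hcont2.intervalIntegrable _ _) hpt
  refine this.trans (le_of_eq ?_)
  rw [intervalIntegral.integral_const_mul]
  congr 1
  rw [integral_rpow (Or.inl (by linarith : (-1:ℝ) < p - 1))]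
  rw [sub_add_cancel]

private lemma core_neg' {p : ℝ} (hp : 1 < p) {f : ℝ → ℝ} (hfc : Continuous f) (hf0 : f 0 = 0)
    (hmono : MonotoneOn (fun t => f t / |t| ^ (p-1)) (Set.Iio 0))
    {σ c : ℝ} (hσ : σ < 0) (hc : 0 ≤ c) (hcσ : c ≤ -σ) :
    (f σ / |σ| ^ (p-1)) * ((|σ| ^ p - c ^ p) / p) ≤ ∫ τ in σ..(-c), f τ := by
  set A := f σ / |σ| ^ (p-1) with hA
  have hp1 : (0:ℝ) ≤ p - 1 := by linarith
  have hcont2 : Continuous fun τ : ℝ => A * |τ| ^ (p-1) :=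
    continuous_const.mul ((rpow_cont' hp1).comp continuous_abs)
  have hpt : ∀ τ ∈ Set.Icc σ (-c), A * |τ| ^ (p-1) ≤ f τ := by
    intro τ ⟨h1, h2⟩
    have hτ0 : τ ≤ 0 := h2.trans (by linarith)
    rcases eq_or_lt_of_le hτ0 with h0 | h0
    · rw [h0, hf0, abs_zero, Real.zero_rpow (by linarith : p - 1 ≠ 0), mul_zero]
    · have hmle := hmono (Set.mem_Iio.2 hσ) (Set.mem_Iio.2 h0) h1
      have : f τ = (f τ / |τ| ^ (p-1)) * |τ| ^ (p-1) := by
        have : |τ| ^ (p-1) ≠ 0 := ne_of_gt (Real.rpow_pos_of_pos (abs_pos.2 h0.ne) _)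
        field_simp
      rw [this]
      exact mul_le_mul_of_nonneg_right hmle (Real.rpow_nonneg (abs_nonneg τ) _)
  have hint := intervalIntegral.integral_mono_on (μ := MeasureTheory.volume)
      (by linarith : σ ≤ -c) (hcont2.intervalIntegrable _ _) (hfc.intervalIntegrable _ _) hpt
  refine le_trans (le_of_eq ?_) hint
  rw [intervalIntegral.integral_const_mul]
  congr 1
  have h1 : (∫ τ in σ..(-c), |τ| ^ (p-1)) = ∫ τ in c..(-σ), |τ| ^ (p-1) := by
    have := intervalIntegral.integral_comp_neg (a := c) (b := -σ) (fun τ => |τ| ^ (p-1))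
    simp only [abs_neg, neg_neg] at this
    rw [← this]
  rw [h1]
  have h2 : (∫ τ in c..(-σ), |τ| ^ (p-1)) = ∫ τ in c..(-σ), τ ^ (p-1) := by
    apply intervalIntegral.integral_congr
    intro x hx
    have hx0 : 0 ≤ x := by
      rcases Set.mem_uIcc.1 hx with ⟨h,_⟩ | ⟨h,_⟩
      · linarith
      · linarith
    simp [abs_of_nonneg hx0]
  rw [h2, integral_rpow (Or.inl (by linarith : (-1:ℝ) < p - 1)), sub_add_cancel]
  rw [abs_of_neg hσ]

private lemma psi_pos' {p : ℝ} (hp : 1 < p) {f : ℝ → ℝ} (hfc : Continuous f) (hf0 : f 0 = 0)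
    (hmono : MonotoneOn (fun t => f t / |t| ^ (p-1)) (Set.Ioi 0))
    {σ c E : ℝ} (hσ : 0 < σ) (hc : 0 ≤ c) (hcσ : c ≤ σ)
    (hE : |∫ τ in (0:ℝ)..c, f τ| ≤ E) :
    (f σ * σ / |σ| ^ p) * c ^ p / p - E ≤ f σ * σ / p - ∫ τ in (0:ℝ)..σ, f τ := by
  set A := f σ / |σ| ^ (p-1) with hA
  have habs : |σ| = σ := abs_of_pos hσ
  have hXfact : A * σ ^ p = f σ * σ := by
    rw [hA, ← habs, div_mul_eq_mul_div, ← rpow_fact' hp σ]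
    have h1 : |σ| ^ (p-1) ≠ 0 := ne_of_gt (Real.rpow_pos_of_pos (abs_pos.2 hσ.ne') _)
    field_simp
    ring_nf
    rw [abs_abs]
  have hYfact : f σ * σ / |σ| ^ p = A := by
    rw [hA, ← rpow_fact' hp σ, habs]
    exact mul_div_mul_right (f σ) (σ ^ (p-1)) hσ.ne'
  have hsplit : (∫ τ in (0:ℝ)..σ, f τ) = (∫ τ in (0:ℝ)..c, f τ) + ∫ τ in c..σ, f τ :=
    (intervalIntegral.integral_add_adjacent_intervals (hfc.intervalIntegrable _ _)
      (hfc.intervalIntegrable _ _)).symm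
  have hcore := core_pos' hp hfc hf0 hmono hσ hc hcσ
  have hI0 : (∫ τ in (0:ℝ)..c, f τ) ≤ E := (abs_le.1 hE).2
  have hsd : A * ((σ ^ p - c ^ p)/p) = A * σ ^ p / p - A * c ^ p / p := by ring
  rw [hYfact, hsplit]
  rw [hsd, hXfact] at hcore
  linarith

private lemma psi_neg' {p : ℝ} (hp : 1 < p) {f : ℝ → ℝ} (hfc : Continuous f) (hf0 : f 0 = 0)
    (hmono : MonotoneOn (fun t => f t / |t| ^ (p-1)) (Set.Iio 0))
    {σ c E : ℝ} (hσ : σ < 0) (hc : 0 ≤ c) (hcσ : c ≤ -σ)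
    (hE : |∫ τ in (0:ℝ)..(-c), f τ| ≤ E) :
    (f σ * σ / |σ| ^ p) * c ^ p / p - E ≤ f σ * σ / p - ∫ τ in (0:ℝ)..σ, f τ := by
  set A := f σ / |σ| ^ (p-1) with hA
  have habs : |σ| = -σ := abs_of_neg hσ
  have hXfact : A * |σ| ^ p = -(f σ * σ) := by
    rw [hA, ← rpow_fact' hp σ]
    have h1 : |σ| ^ (p-1) ≠ 0 := ne_of_gt (Real.rpow_pos_of_pos (abs_pos.2 hσ.ne) _)
    field_simp
    rw [habs]; ring
  have hYfact : (f σ * σ / |σ| ^ p) * c ^ p = -(A * c ^ p) := by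
    rw [hA, ← rpow_fact' hp σ]
    have h1 : |σ| ^ (p-1) ≠ 0 := ne_of_gt (Real.rpow_pos_of_pos (abs_pos.2 hσ.ne) _)
    have h2 : |σ| ≠ 0 := abs_ne_zero.2 hσ.ne
    field_simp
    rw [habs]; ring
  have hadd : (∫ τ in (0:ℝ)..σ, f τ) + (∫ τ in σ..(-c), f τ) = ∫ τ in (0:ℝ)..(-c), f τ :=
    intervalIntegral.integral_add_adjacent_intervals (hfc.intervalIntegrable _ _)
      (hfc.intervalIntegrable _ _)
  have hcore := core_neg' hp hfc hf0 hmono hσ hc hcσ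
  have hI0 : (∫ τ in (0:ℝ)..(-c), f τ) ≤ E := (abs_le.1 hE).2
  have hsd : A * ((|σ| ^ p - c ^ p)/p) = A * |σ| ^ p / p - A * c ^ p / p := by ring
  rw [hYfact]
  rw [hsd, hXfact] at hcore
  have h5 : (-(f σ * σ))/p = -(f σ * σ / p) := neg_div _ _
  have h6 : (-(A * c ^ p))/p = -(A * c ^ p / p) := neg_div _ _
  linarith

private lemma psi_nonneg' {p : ℝ} (hp : 1 < p) {f : ℝ → ℝ} (hfc : Continuous f) (hf0 : f 0 = 0)
    (hmP : MonotoneOn (fun t => f t / |t| ^ (p-1)) (Set.Ioi 0))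
    (hmN : MonotoneOn (fun t => f t / |t| ^ (p-1)) (Set.Iio 0)) (σ : ℝ) :
    0 ≤ f σ * σ / p - ∫ τ in (0:ℝ)..σ, f τ := by
  have hE : |∫ τ in (0:ℝ)..(0:ℝ), f τ| ≤ (0:ℝ) := by
    rw [intervalIntegral.integral_same, abs_zero]
  rcases lt_trichotomy σ 0 with h | h | h
  · have := psi_neg' hp hfc hf0 hmN h le_rfl (by linarith)
      (by rw [neg_zero, intervalIntegral.integral_same, abs_zero])
    simpa [Real.zero_rpow (by linarith : p ≠ 0)] using this
  · simp [h, hf0]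
  · have := psi_pos' hp hfc hf0 hmP h le_rfl (by linarith) hE
    simpa [Real.zero_rpow (by linarith : p ≠ 0)] using this

private lemma psi_lower' {p : ℝ} (hp : 1 < p) {f : ℝ → ℝ} (hfc : Continuous f) (hf0 : f 0 = 0)
    (hmP : MonotoneOn (fun t => f t / |t| ^ (p-1)) (Set.Ioi 0))
    (hmN : MonotoneOn (fun t => f t / |t| ^ (p-1)) (Set.Iio 0))
    {σ c E : ℝ} (hσ : σ ≠ 0) (hc : 0 ≤ c) (hcσ : c ≤ |σ|)
    (hE : ∀ t : ℝ, |t| ≤ c → |∫ τ in (0:ℝ)..t, f τ| ≤ E) :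
    (f σ * σ / |σ| ^ p) * c ^ p / p - E ≤ f σ * σ / p - ∫ τ in (0:ℝ)..σ, f τ := by
  rcases hσ.lt_or_gt with h | h
  · exact psi_neg' hp hfc hf0 hmN h hc (by rw [abs_of_neg h] at hcσ; linarith)
      (hE (-c) (by rw [abs_neg, abs_of_nonneg hc]))
  · exact psi_pos' hp hfc hf0 hmP h hc (by rwa [abs_of_pos h] at hcσ)
      (hE c (by rw [abs_of_nonneg hc]))

private lemma per_step' {N T : ℕ} {V : Vtx N → ℝ}
    (hA2V : ∀ x (i : Fin N), V (x + (T:ℤ) • Pi.single i 1) = V x) :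
    ∀ (k : ℤ) (x : Vtx N) (i : Fin N), V (x + (k * T) • Pi.single i 1) = V x := by
  intro k
  induction k using Int.induction_on with
  | zero => intro x i; simp
  | succ k ih =>
      intro x i
      have he : x + (((k:ℤ)+1) * (T:ℤ)) • Pi.single i 1
          = (x + ((k:ℤ) * T) • Pi.single i 1) + (T:ℤ) • Pi.single i 1 := by
        module
      rw [he, hA2V, ih]
  | pred k ih =>
      intro x i
      have he : (x + ((-(k:ℤ)-1) * (T:ℤ)) • Pi.single i 1) + (T:ℤ) • Pi.single i 1
          = x + ((-(k:ℤ)) * (T:ℤ)) • Pi.single i 1 := by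
        module
      have h2 := hA2V (x + ((-(k:ℤ)-1) * T) • Pi.single i 1) i
      rw [he, ih] at h2
      exact h2.symm

private lemma per_reduce' {N T : ℕ} (hT : 0 < T) {V : Vtx N → ℝ}
    (hA2V : ∀ x (i : Fin N), V (x + (T:ℤ) • Pi.single i 1) = V x) :
    ∃ D : Finset (Vtx N), D.Nonempty ∧ ∀ x : Vtx N, ∃ y ∈ D, V x = V y := by
  have hTz : (T:ℤ) ≠ 0 := by exact_mod_cast hT.ne'
  have hTpos : (0:ℤ) < T := by exact_mod_cast hT
  have hred : ∀ (s : Finset (Fin N)) (x : Vtx N),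
      V (fun i => if i ∈ s then x i % (T:ℤ) else x i) = V x := by
    intro s
    induction s using Finset.induction_on with
    | empty => intro x; simp
    | @insert j s hj ih =>
        intro x
        have key : (fun i => if i ∈ insert j s then x i % (T:ℤ) else x i)
            = (fun i => if i ∈ s then x i % (T:ℤ) else x i)
              + ((-(x j / (T:ℤ))) * T) • Pi.single j 1 := by
          funext i
          by_cases hij : i = j
          · subst hij
            simp only [Finset.mem_insert, true_or, if_true, Pi.add_apply, Pi.smul_apply,
              Pi.single_eq_same, if_neg hj, smul_eq_mul, mul_one]
            rw [Int.emod_def]; ring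
          · simp only [Finset.mem_insert, hij, false_or, Pi.add_apply, Pi.smul_apply,
              Pi.single_eq_of_ne hij, smul_eq_mul, mul_zero, add_zero]
        rw [key, per_step' hA2V, ih]
  have hfin : (Set.pi Set.univ (fun _ : Fin N => Set.Ico (0:ℤ) T)).Finite :=
    Set.Finite.pi (fun _ => Set.finite_Ico _ _)
  refine ⟨hfin.toFinset, ⟨(fun _ => 0), ?_⟩, ?_⟩
  · simp only [Set.Finite.mem_toFinset, Set.mem_pi, Set.mem_univ, forall_true_left]
    intro i; exact Set.mem_Ico.2 ⟨le_refl 0, hTpos⟩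
  · intro x
    refine ⟨fun i => x i % (T:ℤ), ?_, (hred Finset.univ x).symm.trans (by simp)⟩
    simp only [Set.Finite.mem_toFinset, Set.mem_pi, Set.mem_univ, forall_true_left]
    intro i
    exact Set.mem_Ico.2 ⟨Int.emod_nonneg _ hTz, Int.emod_lt_of_pos _ hTpos⟩

private lemma abs_le_of_uIoc' {s t : ℝ} (hs : s ∈ Set.uIoc (0:ℝ) t) : |s| ≤ |t| := by
  rcases Set.mem_uIoc.1 hs with ⟨h1, h2⟩ | ⟨h1, h2⟩
  · rw [abs_of_pos h1]; exact h2.trans (le_abs_self t)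
  · rw [abs_of_nonpos h2]
    have : -t ≤ |t| := neg_le_abs t
    linarith

end AuxCoercive

set_option maxHeartbeats 1600000 in
/-- Phi is coercive on the Nehari manifold. -/
theorem stmt_13 (N : ℕ) (p q : ℝ) (hp : 1 < p) (hq : p < q)
    (V : Vtx N → ℝ) (f : Vtx N → ℝ → ℝ) (T : ℕ) (hT : 0 < T)
    (hA1 : ∃ a : ℝ, 0 < a ∧ ∀ x u, |f x u| ≤ a * (1 + |u| ^ (q - 1)))
    (hfc : ∀ x, Continuous (f x))
    (hA2V : ∀ x (i : Fin N), V (x + (T : ℤ) • Pi.single i 1) = V x)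
    (hA2f : ∀ x (i : Fin N) (u : ℝ), f (x + (T : ℤ) • Pi.single i 1) u = f x u)
    (hVpos : ∀ x, 0 < V x)
    (hA3 : ∀ ε > (0:ℝ), ∃ δ > (0:ℝ), ∀ x u, |u| < δ → |f x u| ≤ ε * |u| ^ (p - 1))
    (hA4 : ∀ x, StrictMonoOn (fun u => f x u / |u| ^ (p - 1)) (Set.Iio 0) ∧
               StrictMonoOn (fun u => f x u / |u| ^ (p - 1)) (Set.Ioi 0))
    (hA5 : ∀ M : ℝ, ∃ R > (0:ℝ), ∀ x u, R ≤ |u| → M ≤ Fprim f x u / |u| ^ p)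
    (u : ℕ → (Vtx N → ℝ)) (hmem : ∀ n, u n ∈ Nehari N p V f)
    (hnorm : Tendsto (fun n => eNorm N p V (u n)) atTop atTop) :
    Tendsto (fun n => PhiFun N p V f (u n)) atTop atTop := by
  have hp0 : (0:ℝ) < p := by linarith
  have hp0' : p ≠ 0 := hp0.ne'
  have hq1 : (0:ℝ) ≤ q - 1 := by linarith
  obtain ⟨a, ha, hfa⟩ := hA1
  have hf0 : ∀ x, f x 0 = 0 := by
    intro x
    obtain ⟨δ, hδ, h⟩ := hA3 1 one_pos
    have h2 := h x 0 (by simpa using hδ)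
    rw [abs_zero, Real.zero_rpow (by linarith : p - 1 ≠ 0), mul_zero] at h2
    exact abs_eq_zero.1 (le_antisymm h2 (abs_nonneg _))
  have hmP : ∀ x, MonotoneOn (fun t => f x t / |t| ^ (p-1)) (Set.Ioi 0) :=
    fun x => ((hA4 x).2).monotoneOn
  have hmN : ∀ x, MonotoneOn (fun t => f x t / |t| ^ (p-1)) (Set.Iio 0) :=
    fun x => ((hA4 x).1).monotoneOn
  set Ψ : Vtx N → ℝ → ℝ := fun x σ => f x σ * σ / p - Fprim f x σ with hΨdef
  have hΨnn : ∀ x σ, 0 ≤ Ψ x σ := fun x σ =>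
    psi_nonneg' hp (hfc x) (hf0 x) (hmP x) (hmN x) σ
  -- V bounds via periodicity
  obtain ⟨D, hDne, hDred⟩ := per_reduce' hT hA2V
  set V₀ := D.inf' hDne V with hV₀def
  set V₁ := D.sup' hDne V with hV₁def
  have hV₀pos : 0 < V₀ := (Finset.lt_inf'_iff hDne).2 fun y _ => hVpos y
  have hV₀le : ∀ x, V₀ ≤ V x := by
    intro x; obtain ⟨y, hy, he⟩ := hDred x; rw [he]; exact Finset.inf'_le _ hy
  have hVle : ∀ x, V x ≤ V₁ := by
    intro x; obtain ⟨y, hy, he⟩ := hDred x; rw [he]; exact Finset.le_sup' _ hy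
  have hε₃pos : 0 < V₀ / (2*p) := div_pos hV₀pos (by linarith)
  obtain ⟨δ, hδpos, hδ⟩ := hA3 (V₀/(2*p)) hε₃pos
  -- superquadraticity of Ψ
  have hL5 : ∀ K : ℝ, ∃ R : ℝ, 1 ≤ R ∧ ∀ x σ, R ≤ |σ| → K ≤ Ψ x σ := by
    intro K
    obtain ⟨R₀, hR₀pos, hR₀⟩ := hA5 (K + 2*a)
    refine ⟨max R₀ 1, le_max_right _ _, ?_⟩
    intro x σ hσ
    have h1σ : (1:ℝ) ≤ |σ| := le_trans (le_max_right R₀ 1) hσ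
    have hσne : σ ≠ 0 := by
      intro h; rw [h, abs_zero] at h1σ; linarith
    have hσp : (0:ℝ) < |σ| ^ p := Real.rpow_pos_of_pos (abs_pos.2 hσne) p
    have hE : ∀ t : ℝ, |t| ≤ 1 → |∫ τ in (0:ℝ)..t, f x τ| ≤ 2*a := by
      intro t ht
      have hbnd : ∀ s ∈ Set.uIoc (0:ℝ) t, ‖f x s‖ ≤ 2*a := by
        intro s hs
        have hs1 : |s| ≤ 1 := le_trans (abs_le_of_uIoc' hs) ht
        have hsq : |s| ^ (q-1) ≤ 1 := Real.rpow_le_one (abs_nonneg s) hs1 hq1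
        rw [Real.norm_eq_abs]
        linarith [hfa x s, mul_le_mul_of_nonneg_left hsq ha.le]
      have h2 := intervalIntegral.norm_integral_le_of_norm_le_const hbnd
      rw [sub_zero, Real.norm_eq_abs] at h2
      refine h2.trans ?_
      linarith [mul_le_mul_of_nonneg_left ht (by linarith : (0:ℝ) ≤ 2*a)]
    have hpl := psi_lower' hp (hfc x) (hf0 x) (hmP x) (hmN x) hσne zero_le_one h1σ hE
    rw [Real.one_rpow, mul_one] at hpl
    have hψ := hΨnn x σ
    simp only [hΨdef] at hψ
    have hA5x := hR₀ x σ (le_trans (le_max_left R₀ 1) hσ)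
    have hFle : Fprim f x σ ≤ f x σ * σ / p := by linarith
    have e2 : Fprim f x σ / |σ|^p ≤ (f x σ * σ / p) / |σ|^p := (div_le_div_iff_of_pos_right hσp).2 hFle
    have e1 : f x σ * σ / p / |σ|^p = f x σ * σ / |σ|^p / p := div_right_comm _ _ _
    show K ≤ f x σ * σ / p - Fprim f x σ
    have hFr : Fprim f x σ = ∫ τ in (0:ℝ)..σ, f x τ := rfl
    rw [hFr]
    rw [e1] at e2
    linarith
  -- contradiction setup
  by_contra hcon
  obtain ⟨b, hb⟩ : ∃ b : ℝ, ∃ᶠ n in atTop, PhiFun N p V f (u n) < b := by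
    by_contra h
    push_neg at h
    refine hcon (tendsto_atTop.2 fun b => ?_)
    have h2 := h b
    exact h2
  set C := max b 0 with hC
  have hC0 : (0:ℝ) ≤ C := le_max_right _ _
  obtain ⟨R, hR1, hR⟩ := hL5 (C+1)
  set c := δ/2 with hcdef
  have hcpos : 0 < c := by rw [hcdef]; linarith
  have hcp : 0 < c ^ p := Real.rpow_pos_of_pos hcpos p
  have hRpos : (0:ℝ) < R := by linarith
  have hRp : 0 < R ^ p := Real.rpow_pos_of_pos hRpos p
  set μ := p * R ^ p / c ^ p with hμdef
  have hμ0 : 0 ≤ μ := by positivity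
  have hY0 : (0:ℝ) ≤ 2*μ*C + 1 := by positivity
  have hev : ∀ᶠ n in atTop, ((2*μ*C+1) ^ (1/p) : ℝ) ≤ eNorm N p V (u n) :=
    hnorm.eventually_ge_atTop _
  obtain ⟨n, hΦb, hEn⟩ := (hb.and_eventually hev).exists
  set w := u n with hwdef
  obtain ⟨hsumw0, hwne, hderiv⟩ := hmem n
  have hsumw : Summable fun x : Vtx N => |w x| ^ p := hsumw0
  have hΦC : PhiFun N p V f w ≤ C := le_trans hΦb.le (le_max_left _ _)
  -- bounds on w
  have hPnn : ∀ x : Vtx N, 0 ≤ |w x| ^ p := fun x => Real.rpow_nonneg (abs_nonneg _) _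
  set P := ∑' x, |w x| ^ p with hPdef
  have hP0 : 0 ≤ P := tsum_nonneg hPnn
  set M := P ^ (1/p) with hMdef
  have hM0 : 0 ≤ M := Real.rpow_nonneg hP0 _
  have hMb : ∀ x, |w x| ≤ M := by
    intro x
    have h1 : |w x| ^ p ≤ P := Summable.le_tsum hsumw x fun j _ => hPnn j
    have h2 := Real.rpow_le_rpow (hPnn x) h1 (by positivity : (0:ℝ) ≤ 1/p)
    rwa [one_div, Real.rpow_rpow_inv (abs_nonneg _) hp0', ← one_div] at h2
  set M₁ := max M 1 with hM₁def
  have hM₁1 : (1:ℝ) ≤ M₁ := le_max_right _ _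
  set Cf := V₀/(2*p) + a*(1+M₁^(q-1))/δ^(p-1) with hCfdef
  have hδp1 : 0 < δ^(p-1) := Real.rpow_pos_of_pos hδpos _
  have hCf2nn : 0 ≤ a*(1+M₁^(q-1))/δ^(p-1) := by
    have : (0:ℝ) ≤ M₁^(q-1) := Real.rpow_nonneg (by linarith) _
    positivity
  have hCfnn : 0 ≤ Cf := by rw [hCfdef]; linarith [hε₃pos.le]
  have hfb : ∀ x t, |t| ≤ M → |f x t| ≤ Cf * |t|^(p-1) := by
    intro x t ht
    have htp : 0 ≤ |t|^(p-1) := Real.rpow_nonneg (abs_nonneg t) _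
    by_cases h : |t| < δ
    · refine le_trans (hδ x t h) ?_
      exact mul_le_mul_of_nonneg_right (by rw [hCfdef]; linarith) htp
    · push_neg at h
      have h1 : |t| ≤ M₁ := le_trans ht (le_max_left _ _)
      have h2 : |t|^(q-1) ≤ M₁^(q-1) := Real.rpow_le_rpow (abs_nonneg t) h1 hq1
      have hAnn : (0:ℝ) ≤ a*(1+M₁^(q-1)) := by
        have : (0:ℝ) ≤ M₁^(q-1) := Real.rpow_nonneg (by linarith) _
        positivity
      have h4 : |f x t| ≤ a*(1+M₁^(q-1)) := le_trans (hfa x t)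
        (mul_le_mul_of_nonneg_left (by linarith) ha.le)
      have h3 : δ^(p-1) ≤ |t|^(p-1) := Real.rpow_le_rpow hδpos.le h (by linarith)
      have h5 : a*(1+M₁^(q-1)) ≤ a*(1+M₁^(q-1))/δ^(p-1) * |t|^(p-1) := by
        rw [div_mul_eq_mul_div, le_div_iff₀ hδp1]
        exact mul_le_mul_of_nonneg_left h3 hAnn
      refine le_trans h4 (le_trans h5 ?_)
      exact mul_le_mul_of_nonneg_right (by rw [hCfdef]; linarith [hε₃pos.le]) htp
  have hFb : ∀ x t, |t| ≤ M → |Fprim f x t| ≤ Cf * |t|^p := by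
    intro x t ht
    have hbnd : ∀ s ∈ Set.uIoc (0:ℝ) t, ‖f x s‖ ≤ Cf * |t|^(p-1) := by
      intro s hs
      have hst : |s| ≤ |t| := abs_le_of_uIoc' hs
      rw [Real.norm_eq_abs]
      refine le_trans (hfb x s (hst.trans ht)) ?_
      exact mul_le_mul_of_nonneg_left
        (Real.rpow_le_rpow (abs_nonneg s) hst (by linarith)) hCfnn
    have h2 := intervalIntegral.norm_integral_le_of_norm_le_const hbnd
    rw [sub_zero, Real.norm_eq_abs] at h2
    calc |Fprim f x t| ≤ Cf * |t|^(p-1) * |t| := h2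
      _ = Cf * |t|^p := by rw [mul_assoc, rpow_fact' hp t]
  have hfub : ∀ x, |f x (w x) * w x| ≤ Cf * |w x|^p := by
    intro x
    rw [abs_mul]
    calc |f x (w x)| * |w x| ≤ Cf * |w x|^(p-1) * |w x| :=
        mul_le_mul_of_nonneg_right (hfb x _ (hMb x)) (abs_nonneg _)
      _ = Cf * |w x|^p := by rw [mul_assoc, rpow_fact' hp _]
  -- summability
  have hsCfP : Summable (fun x : Vtx N => Cf * |w x|^p) := hsumw.mul_left _
  have sfu : Summable (fun x : Vtx N => f x (w x) * w x) :=
    Summable.of_abs (Summable.of_nonneg_of_le (fun x => abs_nonneg _) hfub hsCfP)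
  have sF : Summable (fun x : Vtx N => Fprim f x (w x)) :=
    Summable.of_abs (Summable.of_nonneg_of_le (fun x => abs_nonneg _)
      (fun x => hFb x _ (hMb x)) hsCfP)
  have sΨ : Summable (fun x : Vtx N => Ψ x (w x)) := by
    simp only [hΨdef]
    exact Summable.sub (sfu.div_const p) sF
  have sV : Summable (fun x : Vtx N => V x * |w x|^p) :=
    Summable.of_nonneg_of_le
      (fun x => mul_nonneg (le_trans hV₀pos.le (hV₀le x)) (hPnn x))
      (fun x => mul_le_mul_of_nonneg_right (hVle x) (hPnn x)) (hsumw.mul_left V₁)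
  have hpE : 0 ≤ pEnergy N p w := by
    apply mul_nonneg (by norm_num)
    apply tsum_nonneg
    intro z
    by_cases hz : LatAdj z.1 z.2 <;> simp [hz, Real.rpow_nonneg, abs_nonneg]
  -- Nehari identity
  have hgrad : gradPair N p w w = pEnergy N p w := by
    unfold gradPair pEnergy
    congr 1
    apply tsum_congr
    intro z
    by_cases hz : LatAdj z.1 z.2
    · simp only [hz, if_true]
      rw [abs_sub_comm (w z.1) (w z.2)]
      exact rpow_fact2' hp (w z.2 - w z.1)
    · simp [hz]
  have hpot : ∀ x : Vtx N, V x * |w x|^(p-2) * w x * w x = V x * |w x|^p := by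
    intro x
    have h1 := rpow_fact2' hp (w x)
    calc V x * |w x|^(p-2) * w x * w x = V x * (|w x|^(p-2) * w x * w x) := by ring
      _ = V x * |w x|^p := by rw [h1]
  have hNeh : eNormP N p V w = ∑' x, f x (w x) * w x := by
    have h0 := hderiv
    unfold PhiDeriv at h0
    rw [hgrad] at h0
    have h1 : (∑' x, V x * |w x|^(p-2) * w x * w x) = ∑' x, V x * |w x|^p :=
      tsum_congr fun x => hpot x
    rw [h1] at h0
    unfold eNormP
    linarith
  -- Phi as a sum of Ψ
  have hΦsum : PhiFun N p V f w = ∑' x, Ψ x (w x) := by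
    unfold PhiFun
    rw [hNeh]
    have h2 : (∑' x, Ψ x (w x))
        = (∑' x, (1/p) * (f x (w x) * w x)) - ∑' x, Fprim f x (w x) := by
      rw [← Summable.tsum_sub (sfu.mul_left (1/p)) sF]
      apply tsum_congr
      intro x
      simp only [hΨdef]
      ring
    rw [h2, tsum_mul_left]
  -- sup bound
  have hsupR : ∀ x, |w x| ≤ R := by
    by_contra hcon2
    push_neg at hcon2
    obtain ⟨x₀, hx₀⟩ := hcon2
    have h1 : C + 1 ≤ Ψ x₀ (w x₀) := hR x₀ (w x₀) hx₀.le
    have h2 : Ψ x₀ (w x₀) ≤ ∑' x, Ψ x (w x) := Summable.le_tsum sΨ x₀ fun j _ => hΨnn j _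
    rw [← hΦsum] at h2
    linarith
  -- master pointwise bound
  have hmaster : ∀ x, f x (w x) * w x ≤ (V₀/2) * |w x|^p + μ * Ψ x (w x) := by
    intro x
    have hΨx := hΨnn x (w x)
    have hμΨ : 0 ≤ μ * Ψ x (w x) := mul_nonneg hμ0 hΨx
    have hwp : 0 ≤ |w x|^p := hPnn x
    by_cases hsm : |w x| < δ
    · have h1 : f x (w x) * w x ≤ (V₀/(2*p)) * |w x|^p := by
        calc f x (w x) * w x ≤ |f x (w x) * w x| := le_abs_self _
          _ = |f x (w x)| * |w x| := abs_mul _ _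
          _ ≤ (V₀/(2*p)) * |w x|^(p-1) * |w x| :=
              mul_le_mul_of_nonneg_right (hδ x (w x) hsm) (abs_nonneg _)
          _ = (V₀/(2*p)) * |w x|^p := by rw [mul_assoc, rpow_fact' hp _]
      have h2 : (V₀/(2*p)) * |w x|^p ≤ (V₀/2) * |w x|^p := by
        apply mul_le_mul_of_nonneg_right ?_ hwp
        apply div_le_div_of_nonneg_left hV₀pos.le (by norm_num) (by linarith)
      calc f x (w x) * w x ≤ (V₀/2) * |w x|^p := le_trans h1 h2
        _ ≤ (V₀/2) * |w x|^p + μ * Ψ x (w x) := le_add_of_nonneg_right hμΨ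
    · push_neg at hsm
      have hσne : w x ≠ 0 := by
        intro h; rw [h, abs_zero] at hsm; linarith
      have hσp : 0 < |w x|^p := Real.rpow_pos_of_pos (abs_pos.2 hσne) p
      have hE : ∀ t : ℝ, |t| ≤ c → |∫ τ in (0:ℝ)..t, f x τ| ≤ (V₀/(2*p)) * c^p := by
        intro t ht
        have hbnd : ∀ s ∈ Set.uIoc (0:ℝ) t, ‖f x s‖ ≤ (V₀/(2*p)) * c^(p-1) := by
          intro s hs
          have hst : |s| ≤ c := le_trans (abs_le_of_uIoc' hs) ht
          have hcδ : c < δ := by rw [hcdef]; linarith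
          have hsδ : |s| < δ := lt_of_le_of_lt hst hcδ
          rw [Real.norm_eq_abs]
          refine le_trans (hδ x s hsδ) ?_
          exact mul_le_mul_of_nonneg_left
            (Real.rpow_le_rpow (abs_nonneg s) hst (by linarith)) hε₃pos.le
        have h2 := intervalIntegral.norm_integral_le_of_norm_le_const hbnd
        rw [sub_zero, Real.norm_eq_abs] at h2
        calc |∫ τ in (0:ℝ)..t, f x τ| ≤ (V₀/(2*p)) * c^(p-1) * |t| := h2
          _ ≤ (V₀/(2*p)) * c^(p-1) * c := by
              apply mul_le_mul_of_nonneg_left ht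
              positivity
          _ = (V₀/(2*p)) * c^p := by
              rw [mul_assoc]
              congr 1
              have : |c| = c := abs_of_pos hcpos
              rw [← this, rpow_fact' hp c, this]
      have hcσ : c ≤ |w x| := le_trans (by rw [hcdef]; linarith) hsm
      have hpl := psi_lower' hp (hfc x) (hf0 x) (hmP x) (hmN x) hσne hcpos.le hcσ hE
      -- hpl : H * c^p / p - E ≤ f x (w x) * w x / p - ∫ ...
      have hFr : Fprim f x (w x) = ∫ τ in (0:ℝ)..(w x), f x τ := rfl
      have hΨeq : Ψ x (w x) = f x (w x) * w x / p - ∫ τ in (0:ℝ)..(w x), f x τ := by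
        simp only [hΨdef]; rw [hFr]
      set H := f x (w x) * w x / |w x|^p with hHdef
      have hpl2 : H * c^p / p - (V₀/(2*p)) * c^p ≤ Ψ x (w x) := by rw [hΨeq]; exact hpl
      have hHid : H * |w x|^p = f x (w x) * w x := div_mul_cancel₀ _ hσp.ne'
      have e1 : H * c^p ≤ p * Ψ x (w x) + (V₀/2) * c^p := by
        have h3 : H * c^p / p ≤ Ψ x (w x) + (V₀/(2*p)) * c^p := by linarith
        have h4 := (div_le_iff₀ hp0).1 h3
        have h5 : (Ψ x (w x) + V₀/(2*p) * c^p) * p = p * Ψ x (w x) + (V₀/2) * c^p := by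
          field_simp
        linarith
      have h2 : H ≤ (p * Ψ x (w x) + (V₀/2) * c^p) / c^p := (le_div_iff₀ hcp).2 e1
      have h3 : H * |w x|^p ≤ ((p * Ψ x (w x) + (V₀/2) * c^p) / c^p) * |w x|^p :=
        mul_le_mul_of_nonneg_right h2 hwp
      have h4 : ((p * Ψ x (w x) + (V₀/2) * c^p) / c^p) * |w x|^p
          = (p * Ψ x (w x) / c^p) * |w x|^p + (V₀/2) * |w x|^p := by
        field_simp
      have hσR : |w x|^p ≤ R^p := Real.rpow_le_rpow (abs_nonneg _) (hsupR x) hp0.le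
      have h5 : (p * Ψ x (w x) / c^p) * |w x|^p ≤ (p * Ψ x (w x) / c^p) * R^p := by
        apply mul_le_mul_of_nonneg_left hσR
        positivity
      have h6 : (p * Ψ x (w x) / c^p) * R^p = μ * Ψ x (w x) := by
        rw [hμdef]
        field_simp
      rw [← hHid]
      linarith
  -- final chain
  have hsum2 : Summable (fun x : Vtx N => (V₀/2) * |w x|^p + μ * Ψ x (w x)) :=
    (hsumw.mul_left (V₀/2)).add (sΨ.mul_left μ)
  have hfinal1 : (∑' x, f x (w x) * w x) ≤ (V₀/2) * P + μ * (∑' x, Ψ x (w x)) := by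
    have h1 := Summable.tsum_le_tsum hmaster sfu hsum2
    rw [Summable.tsum_add (hsumw.mul_left (V₀/2)) (sΨ.mul_left μ), tsum_mul_left, tsum_mul_left] at h1
    exact h1
  have hVP : V₀ * P ≤ ∑' x, V x * |w x|^p := by
    rw [hPdef, ← tsum_mul_left]
    exact Summable.tsum_le_tsum (fun x => mul_le_mul_of_nonneg_right (hV₀le x) (hPnn x))
      (hsumw.mul_left V₀) sV
  have hEP : eNormP N p V w = pEnergy N p w + ∑' x, V x * |w x|^p := rfl
  have hsVnn : 0 ≤ ∑' x, V x * |w x|^p :=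
    tsum_nonneg fun x => mul_nonneg (le_trans hV₀pos.le (hV₀le x)) (hPnn x)
  have hEnn : 0 ≤ eNormP N p V w := by rw [hEP]; linarith
  have hEb : 2*μ*C + 1 ≤ eNormP N p V w := by
    have h3 := Real.rpow_le_rpow (Real.rpow_nonneg hY0 _) hEn hp0.le
    rw [one_div, Real.rpow_inv_rpow hY0 hp0'] at h3
    have h4 : (eNorm N p V w) ^ p = eNormP N p V w := by
      unfold eNorm
      rw [one_div, Real.rpow_inv_rpow hEnn hp0']
    rwa [h4] at h3
  have hΦle : (∑' x, Ψ x (w x)) ≤ C := by rw [← hΦsum]; exact hΦC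
  have hμΦ : μ * (∑' x, Ψ x (w x)) ≤ μ * C := mul_le_mul_of_nonneg_left hΦle hμ0
  have hlast : eNormP N p V w ≤ (1/2) * (eNormP N p V w) + μ * C := by
    rw [hNeh]
    have hh : (1/2) * (∑' x, V x * |w x|^p) ≤ (1/2) * (eNormP N p V w) := by
      rw [hEP]; linarith
    linarith
  linarith
end
end
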